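/- arXiv:0908.3528 — 7 statements merged into one kernel-verified Lean document; each statement's English description precedes it below -/
import Mathlib

section
/- For n ≥ 2 and any integer k > n+1, if X_1,...,X_n are independent nonnegative-integer-valued random variables each with mean 1, and some X_m satisfies P(X_m = k) > 0, then there exists another choice of distribution for X_m (nonnegative-integer-valued with mean 1) that strictly decreases P(X_1 + ... + X_n ≤ n). In particular, any distribution minimizing P(∑X_i ≤ n) puts no mass on values greater than n+1. -/
/-- `p` is the mass function of a nonnegative-integer-valued random variable with mean 1. -/
def IsDist (p : ℕ → ℝ) : Prop :=
  (∀ j, 0 ≤ p j) ∧ HasSum p 1 ∧ HasSum (fun j : ℕ => (j : ℝ) * p j) 1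

/-- Probability that the sum of `n` independent variables with mass functions `p i` is ≤ n. -/
noncomputable def probLe (n : ℕ) (p : Fin n → ℕ → ℝ) : ℝ :=
  ∑ f ∈ Finset.univ.filter (fun f : Fin n → Fin (n + 1) => (∑ i, (f i : ℕ)) ≤ n),
    ∏ i, p i (f i)

lemma aux1 {p : ℕ → ℝ} (hp : IsDist p) :
    HasSum (fun j : ℕ => (j : ℝ) * p (j + 1)) (p 0) := by
  have h : HasSum (fun j : ℕ => (j : ℝ) * p j - p j) 0 := by
    simpa using hp.2.2.sub hp.2.1
  have h' : HasSum (fun j : ℕ => (j:ℝ) * p j - p j)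
      (p 0 + ∑ i ∈ Finset.range 1, ((i:ℝ) * p i - p i)) := by
    simpa using h
  have h2 := (hasSum_nat_add_iff (f := fun j : ℕ => (j : ℝ) * p j - p j) 1).2 h'
  have h3 : (fun j : ℕ => (j:ℝ) * p (j+1)) = fun j : ℕ => ((j+1:ℕ):ℝ) * p (j+1) - p (j+1) := by
    funext j; push_cast; ring
  rw [h3]; exact h2

lemma aux2 {p : ℕ → ℝ} (hp : IsDist p) {k : ℕ} (hk : 1 ≤ k) :
    ((k : ℝ) - 1) * p k ≤ p 0 := by
  have h := le_hasSum (aux1 hp) (k - 1) (fun j _ => mul_nonneg (Nat.cast_nonneg j) (hp.1 _))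
  rwa [Nat.sub_add_cancel hk, Nat.cast_sub hk, Nat.cast_one] at h

lemma aux3 {p : ℕ → ℝ} (hp : IsDist p) : 0 < p 0 ∨ 0 < p 1 := by
  by_contra hc
  push_neg at hc
  have h0 : p 0 = 0 := le_antisymm hc.1 (hp.1 0)
  have h1 : p 1 = 0 := le_antisymm hc.2 (hp.1 1)
  have h := aux1 hp
  rw [h0] at h
  have hz : ∀ j : ℕ, p j = 0 := by
    intro j
    match j with
    | 0 => exact h0
    | 1 => exact h1
    | (j+2) =>
      have hle := le_hasSum h (j+1) (fun i _ => mul_nonneg (Nat.cast_nonneg i) (hp.1 _))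
      have heq : ((j+1:ℕ):ℝ) * p (j+2) = 0 :=
        le_antisymm hle (mul_nonneg (Nat.cast_nonneg _) (hp.1 _))
      rcases mul_eq_zero.1 heq with h' | h'
      · exact absurd h' (by positivity)
      · exact h'
  have h2 : HasSum (fun _ : ℕ => (0:ℝ)) 1 := by
    convert hp.2.1 using 1; exact funext fun j => (hz j).symm
  exact one_ne_zero (h2.unique hasSum_zero)

open Classical in
lemma part1 (n : ℕ) (hn : 2 ≤ n) (k : ℕ) (hk : n + 1 < k) (p : Fin n → ℕ → ℝ)
    (hp : ∀ i, IsDist (p i)) (m : Fin n) (hpm : 0 < p m k) :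
    ∃ q : ℕ → ℝ, IsDist q ∧ probLe n (Function.update p m q) < probLe n p := by
  have hn1 : (0:ℝ) < (n:ℝ) + 1 := by positivity
  have hk1 : (1:ℝ) < (k:ℝ) / ((n:ℝ) + 1) := by
    rw [lt_div_iff₀ hn1]
    have : ((n:ℝ)) + 1 < (k:ℝ) := by exact_mod_cast hk
    linarith
  set c := p m k with hc
  set δ : ℝ := ((k:ℝ) / ((n:ℝ) + 1) - 1) * c with hδ
  have hδpos : 0 < δ := mul_pos (by linarith) hpm
  have hk0 : k ≠ 0 := by omega
  have hkn1 : k ≠ n + 1 := by omega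
  set q : ℕ → ℝ := fun j =>
    if j = 0 then p m 0 - δ
    else if j = n + 1 then p m (n + 1) + (k:ℝ) / ((n:ℝ) + 1) * c
    else if j = k then 0 else p m j with hq
  set d : ℕ → ℝ := fun j => q j - p m j with hd
  have hdsupp : ∀ j ∉ ({0, n + 1, k} : Finset ℕ), d j = 0 := by
    intro j hj
    simp only [Finset.mem_insert, Finset.mem_singleton, not_or] at hj
    simp [hd, hq, hj.1, hj.2.1, hj.2.2]
  have hd0 : d 0 = -δ := by simp [hd, hq]
  have hdn1 : d (n+1) = (k:ℝ) / ((n:ℝ) + 1) * c := by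
    simp [hd, hq, (by omega : n + 1 ≠ 0)]
  have hdk : d k = -c := by simp [hd, hq, hk0, hkn1, hc]
  have hmem : (0:ℕ) ∉ ({n+1, k} : Finset ℕ) := by simp; omega
  have hmem2 : (n+1:ℕ) ∉ ({k} : Finset ℕ) := by simpa using hkn1.symm
  have hsumd : ∑ j ∈ ({0, n + 1, k} : Finset ℕ), d j = 0 := by
    rw [Finset.sum_insert hmem, Finset.sum_insert hmem2, Finset.sum_singleton,
      hd0, hdn1, hdk]
    ring
  have hdsum : HasSum d 0 := by
    rw [← hsumd]; exact hasSum_sum_of_ne_finset_zero hdsupp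
  have hsumjd : ∑ j ∈ ({0, n + 1, k} : Finset ℕ), (j:ℝ) * d j = 0 := by
    rw [Finset.sum_insert hmem, Finset.sum_insert hmem2, Finset.sum_singleton,
      hd0, hdn1, hdk]
    push_cast
    field_simp
    ring
  have hjdsum : HasSum (fun j : ℕ => (j:ℝ) * d j) 0 := by
    rw [← hsumjd]
    exact hasSum_sum_of_ne_finset_zero (fun j hj => by rw [hdsupp j hj, mul_zero])
  have hqpm : q = fun j => p m j + d j := by funext j; simp [hd]
  have hq0 : IsDist q := by
    refine ⟨?_, ?_, ?_⟩
    · intro j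
      have hkk : ((k:ℝ) - 1) * c ≤ p m 0 := aux2 (hp m) (by omega)
      have hdiv : (k:ℝ) / ((n:ℝ) + 1) ≤ (k:ℝ) := div_le_self (Nat.cast_nonneg k) (by linarith)
      have hδle : δ ≤ ((k:ℝ) - 1) * c := by
        apply mul_le_mul_of_nonneg_right _ hpm.le
        linarith
      rcases eq_or_ne j 0 with rfl | hj0
      · simp only [hq]; simp; linarith
      rcases eq_or_ne j (n+1) with rfl | hjn
      · simp only [hq]; simp [(by omega : n + 1 ≠ 0)]
        have : 0 ≤ (k:ℝ) / ((n:ℝ) + 1) * c := by positivity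
        have := (hp m).1 (n+1)
        linarith
      rcases eq_or_ne j k with rfl | hjk
      · simp [hq, hk0, hkn1]
      · simp [hq, hj0, hjn, hjk]; exact (hp m).1 j
    · rw [hqpm]
      simpa using (hp m).2.1.add hdsum
    · have h := (hp m).2.2.add hjdsum
      rw [hqpm]
      have he : (fun j : ℕ => (j:ℝ) * (p m j + d j))
          = fun j : ℕ => (j:ℝ) * p m j + (j:ℝ) * d j := by funext j; ring
      rw [he]; simpa using h
  refine ⟨q, hq0, ?_⟩
  set S := Finset.univ.filter (fun f : Fin n → Fin (n + 1) => (∑ i, (f i : ℕ)) ≤ n) with hSdef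
  have hS : probLe n p - probLe n (Function.update p m q)
      = ∑ f ∈ S, (if (f m : ℕ) = 0 then δ else 0) * ∏ i ∈ Finset.univ.erase m, p i (f i) := by
    rw [probLe, probLe, ← Finset.sum_sub_distrib]
    apply Finset.sum_congr rfl
    intro f _
    have hprod1 : ∏ i, p i ((f i : ℕ)) = p m (f m) * ∏ i ∈ Finset.univ.erase m, p i (f i) :=
      (Finset.mul_prod_erase Finset.univ _ (Finset.mem_univ m)).symm
    have hup : ∀ i, Function.update p m q i ((f i : ℕ))
        = Function.update (fun i => p i ((f i : ℕ))) m (q (f m)) i := by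
      intro i
      rcases eq_or_ne i m with rfl | h
      · simp
      · simp [Function.update_of_ne h]
    have hprod2 : ∏ i, Function.update p m q i ((f i : ℕ))
        = q (f m) * ∏ i ∈ Finset.univ.erase m, p i (f i) := by
      rw [Finset.prod_congr rfl (fun i _ => hup i),
        Finset.prod_update_of_mem (Finset.mem_univ m), Finset.sdiff_singleton_eq_erase]
    rw [hprod1, hprod2, ← sub_mul]
    congr 1
    rcases eq_or_ne ((f m : ℕ)) 0 with h0 | h0
    · rw [h0, if_pos rfl]
      simp only [hq, if_pos rfl]
      ring
    · have hlt : (f m : ℕ) < n + 1 := (f m).isLt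
      have hqe : q ((f m : ℕ)) = p m ((f m : ℕ)) := by
        rw [hq]
        dsimp only
        rw [if_neg h0, if_neg (by omega), if_neg (by omega)]
      rw [hqe, if_neg h0, sub_self]
  have hpm0 : 0 < p m 0 := by
    have h1 := aux2 (hp m) (show 1 ≤ k by omega)
    have h2 : (1:ℝ) < (k:ℝ) := by exact_mod_cast (show 1 < k by omega)
    nlinarith
  set f₀ : Fin n → Fin (n+1) :=
    fun i => if 0 < p i 0 then ⟨0, by omega⟩ else ⟨1, by omega⟩ with hf₀
  have hf₀m : ((f₀ m : ℕ)) = 0 := by simp [hf₀, hpm0]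
  have hf₀mem : f₀ ∈ S := by
    simp only [hSdef, Finset.mem_filter, Finset.mem_univ, true_and]
    calc ∑ i, ((f₀ i : ℕ)) ≤ ∑ _i : Fin n, 1 :=
          Finset.sum_le_sum (fun i _ => by simp only [hf₀]; split <;> simp)
      _ = n := by simp
  have hpos : 0 < ∑ f ∈ S,
      (if (f m : ℕ) = 0 then δ else 0) * ∏ i ∈ Finset.univ.erase m, p i (f i) := by
    apply Finset.sum_pos'
    · intro f _
      apply mul_nonneg
      · split
        · exact hδpos.le
        · exact le_refl 0
      · exact Finset.prod_nonneg fun i _ => (hp i).1 _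
    · refine ⟨f₀, hf₀mem, ?_⟩
      rw [hf₀m, if_pos rfl]
      apply mul_pos hδpos
      apply Finset.prod_pos
      intro i _
      by_cases hi : 0 < p i 0
      · simpa [hf₀, hi] using hi
      · rcases aux3 (hp i) with h | h
        · exact absurd h hi
        · simpa [hf₀, hi] using h
  linarith [hS ▸ hpos]

theorem stmt0 (n : ℕ) (hn : 2 ≤ n) :
    (∀ k : ℕ, n + 1 < k → ∀ p : Fin n → ℕ → ℝ, (∀ i, IsDist (p i)) →
      ∀ m : Fin n, 0 < p m k →
        ∃ q : ℕ → ℝ, IsDist q ∧ probLe n (Function.update p m q) < probLe n p) ∧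
    (∀ p : Fin n → ℕ → ℝ, (∀ i, IsDist (p i)) →
      (∀ p' : Fin n → ℕ → ℝ, (∀ i, IsDist (p' i)) → probLe n p ≤ probLe n p') →
      ∀ (m : Fin n) (k : ℕ), n + 1 < k → p m k = 0) := by
  constructor
  · intro k hk p hp m hpm
    exact part1 n hn k hk p hp m hpm
  · intro p hp hmin m k hk
    by_contra hne
    have hpos : 0 < p m k := lt_of_le_of_ne ((hp m).1 k) (Ne.symm hne)
    obtain ⟨q, hq, hlt⟩ := part1 n hn k hk p hp m hpos
    have hup : ∀ i, IsDist (Function.update p m q i) := by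
      intro i
      rcases eq_or_ne i m with rfl | h
      · simpa using hq
      · simpa [Function.update_of_ne h] using hp i
    exact absurd (hmin _ hup) (not_le.2 hlt)
end

section
/- A distribution minimizing P(X_1+...+X_n ≤ n) over independent nonnegative-integer-valued random variables each with mean 1 can be taken so that each X_i is supported on {0, j_i} for some integer 2 ≤ j_i ≤ n+1, with P(X_i = j_i) = 1/j_i and P(X_i = 0) = 1 - 1/j_i (or X_i ≡ 1). Equivalently, the minimum over all distributions equals the minimum over such two-point distributions. -/
open Finset

noncomputable def q (j : ℕ) : ℕ → ℝ :=
  fun x => if x = 0 then 1 - 1 / (j : ℝ) else if x = j then 1 / (j : ℝ) else 0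

lemma isDist_q {j : ℕ} (hj : 1 ≤ j) : IsDist (q j) := by
  have hj0 : (j : ℝ) ≠ 0 := by positivity
  have hj1 : (1:ℝ) ≤ (j:ℝ) := by exact_mod_cast hj
  have hjn0 : j ≠ 0 := by omega
  refine ⟨?_, ?_, ?_⟩
  · intro x
    unfold q
    have h1 : 1 / (j:ℝ) ≤ 1 := by
      rw [div_le_one (by positivity)]; exact hj1
    split_ifs <;> first | linarith | positivity | exact le_rfl
  · have h0 : HasSum (fun x : ℕ => if x = 0 then 1 - 1/(j:ℝ) else 0) (1 - 1/(j:ℝ)) :=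
      hasSum_ite_eq 0 _
    have h1 : HasSum (fun x : ℕ => if x = j then 1/(j:ℝ) else 0) (1/(j:ℝ)) :=
      hasSum_ite_eq j _
    have hadd := h0.add h1
    have heq : q j = fun x : ℕ =>
        (if x = 0 then 1 - 1/(j:ℝ) else 0) + (if x = j then 1/(j:ℝ) else 0) := by
      funext x
      unfold q
      by_cases hx0 : x = 0
      · subst hx0; simp [Ne.symm hjn0]
      · by_cases hxj : x = j <;> simp [hx0, hxj, hjn0]
    rw [heq]
    convert hadd using 1
    ring
  · have h1 : HasSum (fun x : ℕ => if x = j then (1:ℝ) else 0) 1 := hasSum_ite_eq j 1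
    convert h1 using 1
    funext x
    by_cases hx0 : x = 0
    · subst hx0; simp [Ne.symm hjn0, q]
    · by_cases hxj : x = j
      · subst hxj
        simp only [q, if_neg hx0, if_pos rfl]
        simp [hj0]
      · simp [q, hx0, hxj]
noncomputable def coeff (n : ℕ) (p : Fin n → ℕ → ℝ) (i₀ : Fin n) (k : Fin (n+1)) : ℝ :=
  ∑ f ∈ (Finset.univ.filter (fun f : Fin n → Fin (n + 1) => (∑ i, (f i : ℕ)) ≤ n)).filter
      (fun f => f i₀ = k),
    ∏ i ∈ Finset.univ.erase i₀, p i (f i)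

lemma probLe_update (n : ℕ) (p : Fin n → ℕ → ℝ) (i₀ : Fin n) (r : ℕ → ℝ) :
    probLe n (Function.update p i₀ r) = ∑ k : Fin (n+1), r k * coeff n p i₀ k := by
  unfold probLe coeff
  rw [← Finset.sum_fiberwise (Finset.univ.filter
      (fun f : Fin n → Fin (n + 1) => (∑ i, (f i : ℕ)) ≤ n)) (fun f => f i₀)
      (fun f => ∏ i, Function.update p i₀ r i (f i))]
  refine Finset.sum_congr rfl fun k _ => ?_
  rw [Finset.mul_sum]
  refine Finset.sum_congr rfl fun f hf => ?_
  have hfk : f i₀ = k := (Finset.mem_filter.mp hf).2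
  rw [← Finset.prod_erase_mul Finset.univ _ (Finset.mem_univ i₀)]
  rw [Function.update_self, hfk, mul_comm]
  congr 1
  refine Finset.prod_congr rfl fun i hi => ?_
  rw [Function.update_of_ne (Finset.ne_of_mem_erase hi)]

lemma coeff_nonneg (n : ℕ) (p : Fin n → ℕ → ℝ) (hp : ∀ i x, 0 ≤ p i x) (i₀ : Fin n)
    (k : Fin (n+1)) : 0 ≤ coeff n p i₀ k :=
  Finset.sum_nonneg fun f _ => Finset.prod_nonneg fun i _ => hp i _

lemma exists_q_le (n : ℕ) (hn : 2 ≤ n) (p : Fin n → ℕ → ℝ) (hp : ∀ i, IsDist (p i))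
    (i₀ : Fin n) :
    ∃ j, 1 ≤ j ∧ j ≤ n + 1 ∧ probLe n (Function.update p i₀ (q j)) ≤ probLe n p := by
  set c := coeff n p i₀ with hcdef
  have hcnn : ∀ k, 0 ≤ c k := coeff_nonneg n p (fun i => (hp i).1) i₀
  obtain ⟨j₀, hj₀mem, hj₀min⟩ := Finset.exists_min_image (Finset.Icc 1 (n+1))
      (fun j => ∑ k : Fin (n+1), q j (k : ℕ) * c k) ⟨1, by rw [Finset.mem_Icc]; omega⟩
  obtain ⟨hj₀1, hj₀n⟩ := Finset.mem_Icc.mp hj₀mem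
  set m := ∑ k : Fin (n+1), q j₀ (k : ℕ) * c k with hmdef
  have hm0 : 0 ≤ m :=
    Finset.sum_nonneg fun k _ => mul_nonneg ((isDist_q hj₀1).1 _) (hcnn k)
  refine ⟨j₀, hj₀1, hj₀n, ?_⟩
  rw [probLe_update]
  have hpeq : probLe n p = ∑ k : Fin (n+1), p i₀ (k : ℕ) * c k := by
    conv_lhs => rw [← Function.update_eq_self i₀ p]
    exact probLe_update n p i₀ (p i₀)
  rw [hpeq]
  show m ≤ _
  -- formula for the objective at q j, 1 <= j <= n
  have hOj : ∀ j : ℕ, ∀ (hj1 : 1 ≤ j) (hjn : j ≤ n),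
      (∑ k : Fin (n+1), q j (k : ℕ) * c k)
        = (1 - 1/(j:ℝ)) * c 0 + (1/(j:ℝ)) * c ⟨j, by omega⟩ := by
    intro j hj1 hjn
    have hjf : (⟨j, by omega⟩ : Fin (n+1)) ≠ 0 := by
      simp [Fin.ext_iff]; omega
    rw [Finset.sum_eq_add_of_mem (0 : Fin (n+1)) ⟨j, by omega⟩ (mem_univ _) (mem_univ _)
      (Ne.symm hjf) ?_]
    · have hj0 : j ≠ 0 := by omega
      simp [q, hj0]
    · intro k _ hk
      obtain ⟨hk0, hkj⟩ := hk
      have h1 : (k : ℕ) ≠ 0 := fun h => hk0 (Fin.ext (by simp [h]))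
      have h2 : (k : ℕ) ≠ j := fun h => hkj (by simp [Fin.ext_iff, h])
      simp [q, h1, h2]
  -- formula at j = n+1
  have hOtop : (∑ k : Fin (n+1), q (n+1) (k : ℕ) * c k) = (1 - 1/((n:ℝ)+1)) * c 0 := by
    rw [Finset.sum_eq_single_of_mem (0 : Fin (n+1)) (mem_univ _) ?_]
    · simp [q]
    · intro k _ hk0
      have h1 : (k : ℕ) ≠ 0 := fun h => hk0 (Fin.ext (by simp [h]))
      have h2 : (k : ℕ) ≠ n+1 := by omega
      simp [q, h1, h2]
  -- c0 bound
  have hmc0 : m * ((n:ℝ)+1) ≤ c 0 * n := by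
    have h := hj₀min (n+1) (by rw [Finset.mem_Icc]; omega)
    rw [hOtop] at h
    have hn1 : (0:ℝ) < (n:ℝ)+1 := by positivity
    have : (1 - 1/((n:ℝ)+1)) * ((n:ℝ)+1) = n := by field_simp; ring
    nlinarith [h, hcnn 0]
  -- c k bound
  have hck : ∀ k : Fin (n+1), ((k:ℕ):ℝ) * m - (((k:ℕ):ℝ) - 1) * c 0 ≤ c k := by
    intro k
    rcases Nat.eq_zero_or_pos (k : ℕ) with hk | hk
    · have : k = 0 := by simp [Fin.ext_iff, hk]
      subst this
      simp [hk]
    · have h := hj₀min (k : ℕ) (by rw [Finset.mem_Icc]; omega)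
      rw [hOj (k:ℕ) hk (by omega)] at h
      have hkfin : (⟨(k:ℕ), by omega⟩ : Fin (n+1)) = k := by simp [Fin.ext_iff]
      rw [hkfin] at h
      have hkr : (0:ℝ) < ((k:ℕ):ℝ) := by exact_mod_cast hk
      have hh := mul_le_mul_of_nonneg_right h (le_of_lt hkr)
      have e1 : ((1 - 1/((k:ℕ):ℝ)) * c 0 + (1/((k:ℕ):ℝ)) * c k) * ((k:ℕ):ℝ)
          = (((k:ℕ):ℝ) - 1) * c 0 + c k := by field_simp
      rw [e1] at hh
      nlinarith [hh]
  -- now lower bound the objective for r = p i₀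
  obtain ⟨hrn, hrs, hrm⟩ := hp i₀
  set r := p i₀ with hrdef
  have step1 : ∑ k : Fin (n+1), r (k:ℕ) * (((k:ℕ):ℝ) * m - (((k:ℕ):ℝ) - 1) * c 0)
      ≤ ∑ k : Fin (n+1), r (k:ℕ) * c k :=
    Finset.sum_le_sum fun k _ => mul_le_mul_of_nonneg_left (hck k) (hrn _)
  set A := ∑ k ∈ Finset.range (n+1), r k with hAdef
  set B := ∑ k ∈ Finset.range (n+1), ((k:ℝ) * r k) with hBdef
  have step2 : ∑ k : Fin (n+1), r (k:ℕ) * (((k:ℕ):ℝ) * m - (((k:ℕ):ℝ) - 1) * c 0)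
      = m * B - c 0 * B + c 0 * A := by
    rw [Fin.sum_univ_eq_sum_range (fun k => r k * ((k:ℝ) * m - ((k:ℝ) - 1) * c 0))]
    rw [hAdef, hBdef, Finset.mul_sum, Finset.mul_sum, Finset.mul_sum,
      ← Finset.sum_sub_distrib, ← Finset.sum_add_distrib]
    exact Finset.sum_congr rfl fun k _ => by ring
  -- tail facts
  have hrsummable : Summable r := hrs.summable
  have hrmsummable : Summable (fun k : ℕ => (k:ℝ) * r k) := hrm.summable
  have hA1 : A ≤ 1 := sum_le_hasSum _ (fun k _ => hrn k) hrs
  have hB1 : B ≤ 1 := sum_le_hasSum _ (fun k _ => mul_nonneg (by positivity) (hrn k)) hrm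
  have hTA : A + ∑' i, r (i + (n+1)) = 1 := by
    rw [hAdef, Summable.sum_add_tsum_nat_add (n+1) hrsummable, hrs.tsum_eq]
  have hMB : B + ∑' i, ((i + (n+1) : ℕ):ℝ) * r (i + (n+1)) = 1 := by
    rw [hBdef]
    rw [show (fun k : ℕ => ((k:ℕ):ℝ) * r k) = fun k : ℕ => (k:ℝ) * r k from rfl] at hrmsummable
    have := Summable.sum_add_tsum_nat_add (f := fun k : ℕ => (k:ℝ) * r k) (n+1) hrmsummable
    rw [hrm.tsum_eq] at this
    exact_mod_cast this
  set T := ∑' i, r (i + (n+1)) with hTdef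
  set M := ∑' i, ((i + (n+1) : ℕ):ℝ) * r (i + (n+1)) with hMdef
  have hT0 : 0 ≤ T := tsum_nonneg (fun i => hrn _)
  have htail : ((n:ℝ)+1) * T ≤ M := by
    rw [hTdef, ← tsum_mul_left]
    apply Summable.tsum_le_tsum
    · intro i
      apply mul_le_mul_of_nonneg_right _ (hrn _)
      push_cast
      linarith [Nat.cast_nonneg (α := ℝ) i]
    · exact ((summable_nat_add_iff (n+1)).2 hrsummable).mul_left _
    · exact_mod_cast (summable_nat_add_iff (f := fun k : ℕ => (k:ℝ) * r k) (n+1)).2 hrmsummable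
  have eT : T = 1 - A := by linarith [hTA]
  have eM : M = 1 - B := by linarith [hMB]
  rw [eT, eM] at htail
  have hnr : (0:ℝ) < n := by
    have h2 : (2:ℝ) ≤ n := by exact_mod_cast hn
    linarith
  have hAB : 0 ≤ A - B := by nlinarith [htail, hA1, hnr]
  have hprod : m*((n:ℝ)+1)*(A-B) ≤ c 0*(n:ℝ)*(A-B) := mul_le_mul_of_nonneg_right hmc0 hAB
  have hkey : (n:ℝ) + B ≤ ((n:ℝ)+1)*A := by nlinarith [htail]
  have hkeym : m*((n:ℝ) + B) ≤ m*(((n:ℝ)+1)*A) := mul_le_mul_of_nonneg_left hkey hm0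
  calc m ≤ m * B - c 0 * B + c 0 * A := by nlinarith [hprod, hkeym, hnr]
    _ = ∑ k : Fin (n+1), r (k:ℕ) * (((k:ℕ):ℝ) * m - (((k:ℕ):ℝ) - 1) * c 0) := step2.symm
    _ ≤ ∑ k : Fin (n+1), r (k:ℕ) * c k := step1

lemma exists_all_q (n : ℕ) (hn : 2 ≤ n) (p' : Fin n → ℕ → ℝ) (hp' : ∀ i, IsDist (p' i)) :
    ∃ t : Fin n → ℕ, (∀ i, 1 ≤ t i ∧ t i ≤ n + 1) ∧
      probLe n (fun i => q (t i)) ≤ probLe n p' := by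
  have main : ∀ k : ℕ, k ≤ n → ∃ p : Fin n → ℕ → ℝ, (∀ i, IsDist (p i)) ∧
      (∀ i : Fin n, (i : ℕ) < k → ∃ j, 1 ≤ j ∧ j ≤ n + 1 ∧ p i = q j) ∧
      probLe n p ≤ probLe n p' := by
    intro k
    induction k with
    | zero => exact fun _ => ⟨p', hp', fun i h => absurd h (by omega), le_rfl⟩
    | succ k ih =>
      intro hk
      obtain ⟨p, hpd, hpq, hple⟩ := ih (by omega)
      set i₀ : Fin n := ⟨k, by omega⟩ with hi₀
      obtain ⟨j, hj1, hjn, hle⟩ := exists_q_le n hn p hpd i₀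
      refine ⟨Function.update p i₀ (q j), ?_, ?_, le_trans hle hple⟩
      · intro i
        rcases eq_or_ne i i₀ with rfl | hne
        · rw [Function.update_self]; exact isDist_q hj1
        · rw [Function.update_of_ne hne]; exact hpd i
      · intro i hi
        rcases eq_or_ne i i₀ with rfl | hne
        · exact ⟨j, hj1, hjn, by rw [Function.update_self]⟩
        · have hik : (i : ℕ) < k := by
            have h1 : (i : ℕ) ≠ k := fun h => hne (Fin.ext (by simp [hi₀, h]))
            omega
          obtain ⟨j', h1, h2, h3⟩ := hpq i hik
          exact ⟨j', h1, h2, by rw [Function.update_of_ne hne, h3]⟩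
  obtain ⟨p, hpd, hpq, hple⟩ := main n le_rfl
  have hall : ∀ i : Fin n, ∃ j, 1 ≤ j ∧ j ≤ n + 1 ∧ p i = q j := fun i => hpq i i.isLt
  choose t h1 h2 h3 using hall
  refine ⟨t, fun i => ⟨h1 i, h2 i⟩, ?_⟩
  have hpe : (fun i => q (t i)) = p := funext fun i => (h3 i).symm
  rw [hpe]; exact hple

theorem stmt2 (n : ℕ) (hn : 2 ≤ n) :
    ∃ p : Fin n → ℕ → ℝ,
      (∀ i, IsDist (p i)) ∧
      (∀ i, (p i = fun x => if x = 1 then (1 : ℝ) else 0) ∨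
        ∃ j : ℕ, 2 ≤ j ∧ j ≤ n + 1 ∧
          p i = fun x => if x = 0 then 1 - 1 / (j : ℝ)
                         else if x = j then 1 / (j : ℝ) else 0) ∧
      (∀ p' : Fin n → ℕ → ℝ, (∀ i, IsDist (p' i)) → probLe n p ≤ probLe n p') := by
  obtain ⟨g, -, hgmin⟩ := Finset.exists_min_image (Finset.univ : Finset (Fin n → Fin (n+1)))
      (fun g => probLe n (fun i => q ((g i : ℕ) + 1))) ⟨fun _ => 0, Finset.mem_univ _⟩
  refine ⟨fun i => q ((g i : ℕ) + 1), fun i => isDist_q (by omega), ?_, ?_⟩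
  · intro i
    rcases Nat.eq_zero_or_pos (g i : ℕ) with h | h
    · left
      funext x
      rcases eq_or_ne x 0 with rfl | hx0
      · norm_num [q, h]
      · rcases eq_or_ne x 1 with rfl | hx1
        · norm_num [q, h]
        · simp [q, h, hx0, hx1]
    · right
      exact ⟨(g i : ℕ) + 1, by omega, by have := (g i).isLt; omega, rfl⟩
  · intro p' hp'
    obtain ⟨t, ht, hle⟩ := exists_all_q n hn p' hp'
    have hlt : ∀ i, t i - 1 < n + 1 := fun i => by have := ht i; omega
    set g' : Fin n → Fin (n+1) := fun i => ⟨t i - 1, hlt i⟩ with hg'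
    have heq : (fun i => q ((g' i : ℕ) + 1)) = fun i => q (t i) := by
      funext i
      have h1 := (ht i).1
      have h2 : (g' i : ℕ) + 1 = t i := by simp [hg']; omega
      rw [h2]
    refine le_trans (hgmin g' (Finset.mem_univ _)) (le_trans (le_of_eq ?_) hle)
    rw [heq]
end

section
/- For a binomial random variable B with parameters n and p = m/n where m is a positive integer with m ≤ n, the median of B equals m; in particular P(B ≤ m - 1) ≥ 1/2 - P(B = m). -/
open intervalIntegral Finset

lemma nat_mul_choose (n k : ℕ) (hk : 1 ≤ k) :
    k * n.choose k = n * (n-1).choose (k-1) := by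
  cases n with
  | zero =>
    cases k with
    | zero => omega
    | succ k' => simp [Nat.choose_eq_zero_of_lt (Nat.succ_pos k')]
  | succ n' =>
    cases k with
    | zero => omega
    | succ k' =>
      have := Nat.add_one_mul_choose_eq n' k'
      simpa [Nat.mul_comm] using this.symm

lemma nat_sub_mul_choose (n k : ℕ) (hk : k ≤ n) :
    (n - k) * n.choose k = n * (n-1).choose k := by
  rcases eq_or_lt_of_le hk with h | h
  · subst h
    rcases Nat.eq_zero_or_pos k with rfl | hk0
    · simp
    · simp [Nat.choose_eq_zero_of_lt (by omega : k - 1 < k)]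
  · have h1 : n.choose (k+1) * (k+1) = n.choose k * (n - k) := Nat.choose_succ_right_eq n k
    have h2 : (k+1) * n.choose (k+1) = n * (n-1).choose k := by
      simpa using nat_mul_choose n (k+1) (by omega)
    calc (n - k) * n.choose k = n.choose k * (n-k) := by ring
      _ = n.choose (k+1) * (k+1) := h1.symm
      _ = (k+1) * n.choose (k+1) := by ring
      _ = n * (n-1).choose k := h2

lemma hasDerivAt_term (n k : ℕ) (hk : 1 ≤ k) (hkn : k ≤ n) (x : ℝ) :
    HasDerivAt (fun y : ℝ => (n.choose k : ℝ) * y ^ k * (1 - y) ^ (n - k))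
      ((n:ℝ) * (((n-1).choose (k-1) : ℝ) * x ^ (k-1) * (1-x) ^ ((n-1) - (k-1))
        - ((n-1).choose k : ℝ) * x ^ k * (1-x) ^ ((n-1) - k))) x := by
  have h1 : HasDerivAt (fun y : ℝ => y ^ k) ((k:ℝ) * x ^ (k-1)) x := by
    simpa using hasDerivAt_pow k x
  have hsub : HasDerivAt (fun y : ℝ => 1 - y) (-1 : ℝ) x := by
    simpa using (hasDerivAt_id x).const_sub 1
  have h2 : HasDerivAt (fun y : ℝ => (1 - y) ^ (n-k))
      ((((n-k : ℕ)):ℝ) * (1-x) ^ (n-k-1) * (-1)) x := by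
    simpa [Function.comp_def] using (hasDerivAt_pow (n-k) (1-x)).comp x hsub
  have h3 := ((h1.const_mul ((n.choose k : ℝ))).mul h2)
  refine h3.congr_deriv ?_
  symm
  have e1 : ((k:ℝ) * (n.choose k : ℝ)) = (n:ℝ) * ((n-1).choose (k-1) : ℝ) := by
    exact_mod_cast congrArg (Nat.cast (R := ℝ)) (nat_mul_choose n k hk)
  have e2 : ((((n-k):ℕ):ℝ) * (n.choose k : ℝ)) = (n:ℝ) * ((n-1).choose k : ℝ) := by
    exact_mod_cast congrArg (Nat.cast (R := ℝ)) (nat_sub_mul_choose n k hkn)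
  have e3 : (n-1) - (k-1) = n - k := by omega
  have e4 : (n-1) - k = n - k - 1 := by omega
  rw [e3, e4]
  linear_combination (-(x ^ (k-1) * (1-x) ^ (n-k))) * e1 + (x ^ k * (1-x) ^ (n-k-1)) * e2

lemma hasDerivAt_tailSum (n r : ℕ) (hr : 1 ≤ r) (hrn : r ≤ n) (x : ℝ) :
    HasDerivAt (fun y : ℝ => ∑ k ∈ Finset.Icc r n, (n.choose k : ℝ) * y ^ k * (1 - y) ^ (n - k))
      ((n:ℝ) * ((n-1).choose (r-1) : ℝ) * x ^ (r-1) * (1-x) ^ (n-r)) x := by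
  have key : HasDerivAt (fun y : ℝ => ∑ k ∈ Finset.Icc r n, (n.choose k : ℝ) * y ^ k * (1 - y) ^ (n - k))
      (∑ k ∈ Finset.Icc r n, (n:ℝ) * (((n-1).choose (k-1) : ℝ) * x ^ (k-1) * (1-x) ^ ((n-1) - (k-1))
        - ((n-1).choose k : ℝ) * x ^ k * (1-x) ^ ((n-1) - k))) x := by
    exact HasDerivAt.fun_sum (fun k hk => hasDerivAt_term n k
      (le_trans hr (Finset.mem_Icc.mp hk).1) (Finset.mem_Icc.mp hk).2 x)
  convert key using 1
  set ψ : ℕ → ℝ := fun j => ((n-1).choose j : ℝ) * x ^ j * (1-x) ^ ((n-1) - j) with hψ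
  rw [← Finset.Ico_add_one_right_eq_Icc, Finset.sum_Ico_eq_sum_range]
  have step : ∀ i, (n:ℝ) * (((n-1).choose (r+i-1) : ℝ) * x ^ (r+i-1) * (1-x) ^ ((n-1) - (r+i-1))
        - ((n-1).choose (r+i) : ℝ) * x ^ (r+i) * (1-x) ^ ((n-1) - (r+i)))
      = (fun j => (n:ℝ) * ψ (r+j-1)) i - (fun j => (n:ℝ) * ψ (r+j)) i := by
    intro i
    simp only [hψ]
    ring
  rw [Finset.sum_congr rfl (fun i _ => step i)]
  have tele := Finset.sum_range_sub' (f := fun j => (n:ℝ) * ψ (r+j-1)) (n + 1 - r)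
  have re : ∀ i ∈ Finset.range (n + 1 - r),
      ((fun j => (n:ℝ) * ψ (r+j-1)) i - (fun j => (n:ℝ) * ψ (r+j)) i)
      = ((fun j => (n:ℝ) * ψ (r+j-1)) i - (fun j => (n:ℝ) * ψ (r+j-1)) (i+1)) := by
    intro i _
    have hidx : r + (i+1) - 1 = r + i := by omega
    simp only [hidx]
  rw [Finset.sum_congr rfl re, tele]
  have h1 : r + (n + 1 - r) - 1 = n := by omega
  have h2 : ψ n = 0 := by
    simp [hψ, Nat.choose_eq_zero_of_lt (by omega : n - 1 < n)]
  have h3 : ψ (r + 0 - 1) = ((n-1).choose (r-1) : ℝ) * x ^ (r-1) * (1-x) ^ (n - r) := by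
    simp only [hψ, Nat.add_zero]
    congr 2
    omega
  rw [h1, h2, h3]
  ring

lemma tailSum_eq_integral (n r : ℕ) (hr : 1 ≤ r) (hrn : r ≤ n) (x : ℝ) :
    ∑ k ∈ Finset.Icc r n, (n.choose k : ℝ) * x ^ k * (1 - x) ^ (n - k)
      = ∫ t in (0:ℝ)..x, (n:ℝ) * ((n-1).choose (r-1) : ℝ) * t ^ (r-1) * (1-t) ^ (n-r) := by
  have hint : ∫ t in (0:ℝ)..x, (n:ℝ) * ((n-1).choose (r-1) : ℝ) * t ^ (r-1) * (1-t) ^ (n-r)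
      = (∑ k ∈ Finset.Icc r n, (n.choose k : ℝ) * x ^ k * (1 - x) ^ (n - k))
        - (∑ k ∈ Finset.Icc r n, (n.choose k : ℝ) * (0:ℝ) ^ k * (1 - (0:ℝ)) ^ (n - k)) := by
    apply intervalIntegral.integral_eq_sub_of_hasDerivAt
    · intro t _
      exact hasDerivAt_tailSum n r hr hrn t
    · apply Continuous.intervalIntegrable
      continuity
  have hz : (∑ k ∈ Finset.Icc r n, (n.choose k : ℝ) * (0:ℝ) ^ k * (1 - (0:ℝ)) ^ (n - k)) = 0 := by
    apply Finset.sum_eq_zero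
    intro k hk
    have hk1 : 1 ≤ k := le_trans hr (Finset.mem_Icc.mp hk).1
    simp [zero_pow (by omega : k ≠ 0)]
  rw [hint, hz, sub_zero]

lemma tailSum_one (n r : ℕ) (hrn : r ≤ n) :
    ∑ k ∈ Finset.Icc r n, (n.choose k : ℝ) * (1:ℝ) ^ k * (1 - (1:ℝ)) ^ (n - k) = 1 := by
  rw [Finset.sum_eq_single n]
  · simp
  · intro k hk hkn
    have : k < n := lt_of_le_of_ne (Finset.mem_Icc.mp hk).2 hkn
    simp [zero_pow (by omega : n - k ≠ 0)]
  · intro h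
    exact absurd (Finset.mem_Icc.mpr ⟨hrn, le_refl n⟩) h

-- key quadratic inequality for the reflection case
lemma refl_key (a b : ℕ) (hb : 1 ≤ b) (hba : b ≤ a) {p : ℝ} (y : ℝ)
    (hp : p = ((a:ℝ)+1)/((a:ℝ)+(b:ℝ)+1)) :
    (a:ℝ) * p * (1-2*p+y) * (1-y) ≤ (b:ℝ) * (1-p) * (2*p-y) * y := by
  have hden : (0:ℝ) < (a:ℝ)+(b:ℝ)+1 := by positivity
  have hB1 : (1:ℝ) ≤ (b:ℝ) := by exact_mod_cast hb
  have hBA : (b:ℝ) ≤ (a:ℝ) := by exact_mod_cast hba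
  have hpval : p * ((a:ℝ)+(b:ℝ)+1) = (a:ℝ)+1 := by
    rw [hp]; field_simp
  have hp0 : 0 < p := by rw [hp]; positivity
  have hp1 : p < 1 := by
    rw [hp, div_lt_one hden]; linarith
  -- b*p - a*(1-p) = b/(a+b+1) ≥ 0 and a*p - b*(1-p) = (a(a+1)-b²)/(a+b+1) ≥ 0
  have h1 : 0 ≤ (b:ℝ)*p - (a:ℝ)*(1-p) := by
    have : ((b:ℝ)*p - (a:ℝ)*(1-p)) * ((a:ℝ)+(b:ℝ)+1) = (b:ℝ) := by
      nlinarith [hpval]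
    nlinarith [this, hden]
  have h2 : 0 ≤ (a:ℝ)*p - (b:ℝ)*(1-p) := by
    have key : ((a:ℝ)*p - (b:ℝ)*(1-p)) * ((a:ℝ)+(b:ℝ)+1) = (a:ℝ)*((a:ℝ)+1) - (b:ℝ)^2 := by
      nlinarith [hpval]
    have : (0:ℝ) ≤ (a:ℝ)*((a:ℝ)+1) - (b:ℝ)^2 := by nlinarith
    nlinarith [key, hden, this]
  have hid : (b:ℝ) * (1-p) * (2*p-y) * y - (a:ℝ) * p * (1-2*p+y) * (1-y)
      = p*(1-p)*((b:ℝ)*p - (a:ℝ)*(1-p)) + (y-p)^2*((a:ℝ)*p - (b:ℝ)*(1-p)) := by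
    ring
  nlinarith [hid, mul_nonneg (mul_nonneg (le_of_lt hp0) (by linarith : (0:ℝ) ≤ 1-p)) h1,
    mul_nonneg (sq_nonneg (y-p)) h2]

lemma refl_pointwise (a b : ℕ) (hb : 1 ≤ b) (hba : b ≤ a) {p t : ℝ}
    (hp : p = ((a:ℝ)+1)/((a:ℝ)+(b:ℝ)+1)) (hpt : p ≤ t) (ht : t ≤ 1) :
    t^a * (1-t)^b ≤ (2*p-t)^a * (1-(2*p-t))^b := by
  have hden : (0:ℝ) < (a:ℝ)+(b:ℝ)+1 := by positivity
  have hB1 : (1:ℝ) ≤ (b:ℝ) := by exact_mod_cast hb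
  have hBA : (b:ℝ) ≤ (a:ℝ) := by exact_mod_cast hba
  have hp0 : 0 < p := by rw [hp]; positivity
  have hp1 : p < 1 := by rw [hp, div_lt_one hden]; linarith
  have hphalf : 1/2 < p := by
    rw [hp, lt_div_iff₀ hden]; linarith
  rcases eq_or_lt_of_le ht with rfl | ht1
  · -- t = 1
    have : (1-(1:ℝ))^b = 0 := by
      rw [sub_self, zero_pow (by omega : b ≠ 0)]
    rw [this, mul_zero]
    apply mul_nonneg (pow_nonneg (by linarith) a) (pow_nonneg (by linarith) b)
  rcases eq_or_lt_of_le hpt with rfl | hpt1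
  · -- t = p
    have : 2*p - p = p := by ring
    rw [this]
  -- now p < t < 1 : ratio argument
  set g₁ : ℝ → ℝ := fun y => (2*p-y)^a * (1-(2*p-y))^b with hg₁
  set g₂ : ℝ → ℝ := fun y => y^a * (1-y)^b with hg₂
  have hg₂pos : ∀ y ∈ Set.Icc p t, 0 < g₂ y := by
    intro y hy
    have := hy.1; have := hy.2
    apply mul_pos (pow_pos (by linarith) a) (pow_pos (by linarith) b)
  have hA1pos : ∀ y ∈ Set.Icc p t, 0 < 2*p - y := by
    intro y hy; have := hy.2; linarith
  have hB1pos : ∀ y ∈ Set.Icc p t, 0 < 1-(2*p-y) := by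
    intro y hy; have := hy.1; linarith
  -- derivative of the ratio
  have hasD : ∀ y ∈ Set.Icc p t, HasDerivAt (fun z => g₁ z / g₂ z)
      ((((a:ℝ)*(2*p-y)^(a-1)*(-1)*(1-(2*p-y))^b + (2*p-y)^a * ((b:ℝ)*(1-(2*p-y))^(b-1))) * g₂ y
        - g₁ y * ((a:ℝ)*y^(a-1)*(1-y)^b + y^a * ((b:ℝ)*(1-y)^(b-1)*(-1)))) / (g₂ y)^2) y := by
    intro y hy
    have hc : HasDerivAt (fun z : ℝ => 2*p - z) (-1) y := by
      simpa using (hasDerivAt_id y).const_sub (2*p)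
    have hc2 : HasDerivAt (fun z : ℝ => 1 - (2*p - z)) (1) y := by
      have := hc.const_sub 1
      simpa using this
    have d1 : HasDerivAt (fun z : ℝ => (2*p-z)^a) (((a:ℝ)*(2*p-y)^(a-1))*(-1)) y :=
      (hasDerivAt_pow a (2*p-y)).comp y hc
    have d2 : HasDerivAt (fun z : ℝ => (1-(2*p-z))^b) (((b:ℝ)*(1-(2*p-y))^(b-1))*1) y :=
      (hasDerivAt_pow b (1-(2*p-y))).comp y hc2
    have d3 : HasDerivAt (fun z : ℝ => z^a) ((a:ℝ)*y^(a-1)) y := by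
      simpa using hasDerivAt_pow a y
    have hc3 : HasDerivAt (fun z : ℝ => 1 - z) (-1 : ℝ) y := by
      simpa using (hasDerivAt_id y).const_sub 1
    have d4 : HasDerivAt (fun z : ℝ => (1-z)^b) (((b:ℝ)*(1-y)^(b-1))*(-1)) y :=
      (hasDerivAt_pow b (1-y)).comp y hc3
    have hg1 : HasDerivAt g₁ ((a:ℝ)*(2*p-y)^(a-1)*(-1)*(1-(2*p-y))^b
        + (2*p-y)^a * ((b:ℝ)*(1-(2*p-y))^(b-1))) y := by
      have := d1.mul d2
      simpa [hg₁, Pi.mul_def, mul_comm, mul_assoc, mul_left_comm] using this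
    have hg2 : HasDerivAt g₂ ((a:ℝ)*y^(a-1)*(1-y)^b + y^a * ((b:ℝ)*(1-y)^(b-1)*(-1))) y := by
      have := d3.mul d4
      simpa [hg₂, Pi.mul_def] using this
    exact hg1.div hg2 (ne_of_gt (hg₂pos y hy))
  -- the ratio is monotone on [p, t]
  have hmono : MonotoneOn (fun z => g₁ z / g₂ z) (Set.Icc p t) := by
    apply monotoneOn_of_deriv_nonneg (convex_Icc p t)
    · apply ContinuousOn.div
      · apply Continuous.continuousOn; fun_prop
      · apply Continuous.continuousOn; fun_prop
      · intro y hy; exact ne_of_gt (hg₂pos y hy)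
    · intro y hy
      rw [interior_Icc] at hy
      exact ((hasD y (Set.mem_Icc_of_Ioo hy)).differentiableAt).differentiableWithinAt
    · intro y hy
      rw [interior_Icc] at hy
      have hyI : y ∈ Set.Icc p t := Set.mem_Icc_of_Ioo hy
      rw [(hasD y hyI).deriv]
      apply div_nonneg _ (sq_nonneg _)
      -- numerator ≥ 0
      have e1 : (2*p-y)^a = (2*p-y)^(a-1) * (2*p-y) := by
        rw [← pow_succ]; congr 1; omega
      have e2 : (1-(2*p-y))^b = (1-(2*p-y))^(b-1) * (1-(2*p-y)) := by
        rw [← pow_succ]; congr 1; omega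
      have e3 : y^a = y^(a-1) * y := by
        rw [← pow_succ]; congr 1; omega
      have e4 : (1-y)^b = (1-y)^(b-1) * (1-y) := by
        rw [← pow_succ]; congr 1; omega
      have hid : ((a:ℝ)*(2*p-y)^(a-1)*(-1)*(1-(2*p-y))^b + (2*p-y)^a * ((b:ℝ)*(1-(2*p-y))^(b-1))) * g₂ y
          - g₁ y * ((a:ℝ)*y^(a-1)*(1-y)^b + y^a * ((b:ℝ)*(1-y)^(b-1)*(-1)))
          = (2*p-y)^(a-1) * (1-(2*p-y))^(b-1) * y^(a-1) * (1-y)^(b-1) *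
            (2 * ((b:ℝ)*(1-p)*(2*p-y)*y - (a:ℝ)*p*(1-2*p+y)*(1-y))) := by
        simp only [hg₁, hg₂]
        rw [e1, e2, e3, e4]
        ring
      rw [hid]
      apply mul_nonneg
      · apply mul_nonneg; apply mul_nonneg; apply mul_nonneg
        · exact pow_nonneg (le_of_lt (hA1pos y hyI)) _
        · exact pow_nonneg (le_of_lt (hB1pos y hyI)) _
        · exact pow_nonneg (by linarith [hy.1] : (0:ℝ) ≤ y) _
        · exact pow_nonneg (by linarith [hy.2] : (0:ℝ) ≤ 1-y) _
      · nlinarith [refl_key a b hb hba y hp]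
  -- conclude
  have hτp : g₁ p / g₂ p = 1 := by
    have : (2*p - p) = p := by ring
    rw [hg₁, hg₂]
    simp only [this]
    rw [div_self (ne_of_gt (hg₂pos p (Set.mem_Icc.mpr ⟨le_refl p, le_of_lt hpt1⟩)))]
  have hle := hmono (Set.mem_Icc.mpr ⟨le_refl p, le_of_lt hpt1⟩)
    (Set.mem_Icc.mpr ⟨le_of_lt hpt1, le_refl t⟩) (le_of_lt hpt1)
  change g₁ p / g₂ p ≤ g₁ t / g₂ t at hle
  rw [hτp] at hle
  have htpos := hg₂pos t (Set.mem_Icc.mpr ⟨le_of_lt hpt1, le_refl t⟩)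
  calc t^a * (1-t)^b = g₂ t := rfl
    _ ≤ g₁ t := (one_le_div htpos).mp hle
    _ = (2*p-t)^a * (1-(2*p-t))^b := rfl

lemma beta_refl (a b : ℕ) (hb : 1 ≤ b) (hba : b ≤ a) :
    (∫ t in (((a:ℝ)+1)/((a:ℝ)+(b:ℝ)+1))..1, t^a * (1-t)^b)
      ≤ ∫ t in (0:ℝ)..(((a:ℝ)+1)/((a:ℝ)+(b:ℝ)+1)), t^a * (1-t)^b := by
  set p : ℝ := ((a:ℝ)+1)/((a:ℝ)+(b:ℝ)+1) with hp
  have hden : (0:ℝ) < (a:ℝ)+(b:ℝ)+1 := by positivity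
  have hB1 : (1:ℝ) ≤ (b:ℝ) := by exact_mod_cast hb
  have hBA : (b:ℝ) ≤ (a:ℝ) := by exact_mod_cast hba
  have hp0 : 0 < p := by rw [hp]; positivity
  have hp1 : p < 1 := by rw [hp, div_lt_one hden]; linarith
  have hphalf : 1/2 < p := by rw [hp, lt_div_iff₀ hden]; linarith
  have hcont : Continuous (fun t : ℝ => t^a * (1-t)^b) := by fun_prop
  have hcont2 : Continuous (fun t : ℝ => (2*p-t)^a * (1-(2*p-t))^b) := by fun_prop
  have step1 : (∫ t in p..1, t^a * (1-t)^b) ≤ ∫ t in p..1, (2*p-t)^a * (1-(2*p-t))^b := by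
    apply intervalIntegral.integral_mono_on (le_of_lt hp1)
      (hcont.intervalIntegrable _ _) (hcont2.intervalIntegrable _ _)
    intro t ht
    exact refl_pointwise a b hb hba hp ht.1 ht.2
  have step2 : (∫ t in p..1, (2*p-t)^a * (1-(2*p-t))^b) = ∫ t in (2*p-1)..p, t^a * (1-t)^b := by
    have := intervalIntegral.integral_comp_sub_left (a := p) (b := 1)
      (fun t : ℝ => t^a * (1-t)^b) (2*p)
    convert this using 2 <;> ring
  have step3 : (∫ t in (2*p-1)..p, t^a * (1-t)^b) ≤ ∫ t in (0:ℝ)..p, t^a * (1-t)^b := by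
    have hsplit : (∫ t in (0:ℝ)..(2*p-1), t^a * (1-t)^b) + (∫ t in (2*p-1)..p, t^a * (1-t)^b)
        = ∫ t in (0:ℝ)..p, t^a * (1-t)^b :=
      intervalIntegral.integral_add_adjacent_intervals
        (hcont.intervalIntegrable _ _) (hcont.intervalIntegrable _ _)
    have hnn : 0 ≤ ∫ t in (0:ℝ)..(2*p-1), t^a * (1-t)^b := by
      apply intervalIntegral.integral_nonneg (by linarith)
      intro u hu
      apply mul_nonneg (pow_nonneg (by linarith [hu.1]) a) (pow_nonneg (by linarith [hu.2]) b)
    linarith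
  calc (∫ t in p..1, t^a * (1-t)^b) ≤ ∫ t in p..1, (2*p-t)^a * (1-(2*p-t))^b := step1
    _ = ∫ t in (2*p-1)..p, t^a * (1-t)^b := step2
    _ ≤ ∫ t in (0:ℝ)..p, t^a * (1-t)^b := step3

-- key inequality for substitution case
lemma sub_key (a b : ℕ) (hab : a < b) {x₀ w : ℝ} (u : ℝ)
    (hx : x₀ = ((a:ℝ)+1)/(b:ℝ)) (hw : w = x₀^2) (hu0 : 0 ≤ u) (hu1 : u ≤ 1) :
    ((a:ℝ)+(b:ℝ)+2) * (1-w) * u * (1-u) ≤ ((b:ℝ)-(a:ℝ)) * (w + u*(1-w)) := by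
  have hbpos : (0:ℝ) < b := by
    have : (1:ℝ) ≤ (b:ℝ) := by exact_mod_cast Nat.one_le_iff_ne_zero.mpr (by omega)
    linarith
  have hab' : (a:ℝ) + 1 ≤ (b:ℝ) := by exact_mod_cast hab
  have hx0 : 0 < x₀ := by rw [hx]; positivity
  have hx1 : x₀ ≤ 1 := by rw [hx, div_le_one hbpos]; linarith
  -- scalar inequality : (a+b+2)(1-x₀) ≤ (b-a)(1+x₀)
  have hscal : ((a:ℝ)+(b:ℝ)+2) * (1-x₀) ≤ ((b:ℝ)-(a:ℝ)) * (1+x₀) := by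
    have hkey : ((b:ℝ)-(a:ℝ))*(1+x₀) - ((a:ℝ)+(b:ℝ)+2)*(1-x₀) = (2*(a:ℝ)+2)/b := by
      rw [hx]; field_simp; ring
    have : (0:ℝ) ≤ (2*(a:ℝ)+2)/b := by positivity
    linarith
  -- identity : (w + u(1-w)) - (1+x₀)²u(1-u) = (x₀(1-u)-u)²
  have hid : (w + u*(1-w)) - (1+x₀)^2*u*(1-u) = (x₀*(1-u)-u)^2 := by
    rw [hw]; ring
  have h1 : ((a:ℝ)+(b:ℝ)+2)*(1-w)*u*(1-u) ≤ ((b:ℝ)-(a:ℝ))*(1+x₀)^2*u*(1-u) := by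
    have hfac : (1-w) = (1-x₀)*(1+x₀) := by rw [hw]; ring
    rw [hfac]
    have huu : 0 ≤ u*(1-u) := mul_nonneg hu0 (by linarith)
    calc ((a:ℝ)+(b:ℝ)+2)*((1-x₀)*(1+x₀))*u*(1-u)
        = (((a:ℝ)+(b:ℝ)+2)*(1-x₀)) * ((1+x₀)*(u*(1-u))) := by ring
      _ ≤ (((b:ℝ)-(a:ℝ))*(1+x₀)) * ((1+x₀)*(u*(1-u))) := by
          apply mul_le_mul_of_nonneg_right hscal
          apply mul_nonneg (by linarith) huu
      _ = ((b:ℝ)-(a:ℝ))*(1+x₀)^2*u*(1-u) := by ring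
  have h2 : ((b:ℝ)-(a:ℝ))*(1+x₀)^2*u*(1-u) ≤ ((b:ℝ)-(a:ℝ)) * (w + u*(1-w)) := by
    have hba : (0:ℝ) ≤ (b:ℝ)-(a:ℝ) := by linarith
    nlinarith [sq_nonneg (x₀*(1-u)-u), hba]
  linarith

lemma sub_pointwise (a b : ℕ) (hab : a < b) {x₀ w p : ℝ} (u : ℝ)
    (hx : x₀ = ((a:ℝ)+1)/(b:ℝ)) (hw : w = x₀^2) (hp : p = x₀/(1+x₀))
    (hu0 : 0 ≤ u) (hup : u ≤ p) :
    w^(a+1) * ((1-u)^a * u^b) ≤ (u^a * (1-u)^b) * (w + u*(1-w))^(a+b+2) := by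
  have hbpos : (0:ℝ) < b := by
    have : (1:ℝ) ≤ (b:ℝ) := by exact_mod_cast Nat.one_le_iff_ne_zero.mpr (by omega)
    linarith
  have hab' : (a:ℝ) + 1 ≤ (b:ℝ) := by exact_mod_cast hab
  have hx0 : 0 < x₀ := by rw [hx]; positivity
  have hx1 : x₀ ≤ 1 := by rw [hx, div_le_one hbpos]; linarith
  have hw0 : 0 < w := by rw [hw]; positivity
  have hw1 : w ≤ 1 := by rw [hw]; nlinarith
  have hp0 : 0 < p := by rw [hp]; positivity
  have hp1 : p < 1 := by
    rw [hp, div_lt_one (by linarith)]; linarith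
  set c : ℕ := b - a with hc
  set M : ℕ := a + b + 2 with hM
  have hc1 : 1 ≤ c := by omega
  set D : ℝ → ℝ := fun y => w + y*(1-w) with hD
  have hDpos : ∀ y ∈ Set.Icc (0:ℝ) p, 0 < D y := by
    intro y hy
    have h1 : D y = w*(1-y) + y := by rw [hD]; ring
    rw [h1]
    have := hy.1; have := hy.2
    have : 0 < w*(1-y) := mul_pos hw0 (by nlinarith)
    nlinarith
  rcases eq_or_lt_of_le hu0 with rfl | hu0'
  · -- u = 0
    have : (0:ℝ)^b = 0 := zero_pow (by omega)
    rw [this, mul_zero, mul_zero]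
    apply mul_nonneg (mul_nonneg (pow_nonneg (le_refl _) a) (pow_nonneg (by norm_num) b))
    exact pow_nonneg (le_of_lt (hDpos 0 (Set.mem_Icc.mpr ⟨le_refl _, le_of_lt hp0⟩))) _
  -- u > 0
  set σ : ℝ → ℝ := fun y => ((1-y)/y)^c * (D y)^M with hσ
  have hasD : ∀ y, 0 < y → y < 1 → HasDerivAt σ
      (((c:ℝ) * ((1-y)/y)^(c-1) * (((-1)*y - (1-y)*1)/y^2)) * (D y)^M
        + ((1-y)/y)^c * ((M:ℝ) * (D y)^(M-1) * (1-w))) y := by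
    intro y hy0 hy1
    have hq : HasDerivAt (fun z : ℝ => (1-z)/z) (((-1)*y - (1-y)*1)/y^2) y := by
      exact HasDerivAt.div (by simpa using (hasDerivAt_id y).const_sub 1) (hasDerivAt_id y)
        (ne_of_gt hy0)
    have hqc : HasDerivAt (fun z : ℝ => ((1-z)/z)^c)
        ((c:ℝ) * ((1-y)/y)^(c-1) * (((-1)*y - (1-y)*1)/y^2)) y := hq.pow (n := c)
    have hDd : HasDerivAt D (1-w) y := by
      simpa [hD] using ((hasDerivAt_id y).mul_const (1-w)).const_add w
    have hDM : HasDerivAt (fun z : ℝ => (D z)^M) ((M:ℝ) * (D y)^(M-1) * (1-w)) y := hDd.pow (n := M)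
    exact hqc.mul hDM
  have hanti : AntitoneOn σ (Set.Icc u p) := by
    apply antitoneOn_of_deriv_nonpos (convex_Icc u p)
    · apply ContinuousOn.mul
      · apply ContinuousOn.pow
        apply ContinuousOn.div
        · fun_prop
        · fun_prop
        · intro y hy; exact ne_of_gt (lt_of_lt_of_le hu0' hy.1)
      · fun_prop
    · intro y hy
      rw [interior_Icc] at hy
      exact ((hasD y (lt_trans hu0' hy.1) (lt_trans hy.2 hp1)).differentiableAt).differentiableWithinAt
    · intro y hy
      rw [interior_Icc] at hy
      have hy0 : 0 < y := lt_trans hu0' hy.1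
      have hy1 : y < 1 := lt_trans hy.2 hp1
      have hyp : y ≤ p := le_of_lt hy.2
      rw [(hasD y hy0 hy1).deriv]
      have hsplit1 : ((1-y)/y)^c = ((1-y)/y)^(c-1) * ((1-y)/y) := by
        have h1 : c - 1 + 1 = c := by omega
        conv_lhs => rw [← h1]
        rw [pow_succ]
      have hsplit2 : (D y)^M = (D y)^(M-1) * (D y) := by
        have h1 : M - 1 + 1 = M := by omega
        conv_lhs => rw [← h1]
        rw [pow_succ]
      have hidd : ((c:ℝ) * ((1-y)/y)^(c-1) * (((-1)*y - (1-y)*1)/y^2)) * (D y)^M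
          + ((1-y)/y)^c * ((M:ℝ) * (D y)^(M-1) * (1-w))
          = ((1-y)/y)^(c-1) * (D y)^(M-1) * (((M:ℝ)*(1-w)*y*(1-y) - (c:ℝ)*(D y))/y^2) := by
        rw [hsplit1, hsplit2]
        field_simp
        try ring
      rw [hidd]
      apply mul_nonpos_of_nonneg_of_nonpos
      · apply mul_nonneg
        · apply pow_nonneg
          apply div_nonneg (by linarith) (le_of_lt hy0)
        · exact pow_nonneg (le_of_lt (hDpos y (Set.mem_Icc.mpr ⟨le_of_lt hy0, hyp⟩))) _
      · apply div_nonpos_of_nonpos_of_nonneg _ (sq_nonneg y)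
        have hkey := sub_key a b hab y hx hw (le_of_lt hy0) (le_of_lt hy1)
        have hMc : ((M:ℕ):ℝ) = (a:ℝ)+(b:ℝ)+2 := by rw [hM]; push_cast; ring
        have hcc : ((c:ℕ):ℝ) = (b:ℝ)-(a:ℝ) := by rw [hc]; push_cast [Nat.cast_sub (le_of_lt hab)]; ring
        have hDy : D y = w + y*(1-w) := rfl
        rw [hMc, hcc, hDy]
        linarith
  -- evaluate σ at p
  have hx0ne : x₀ ≠ 0 := ne_of_gt hx0
  have h1p : 1 - p = 1/(1+x₀) := by
    rw [hp]; field_simp; ring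
  have hDp : D p = x₀ := by
    rw [hD, hp, hw]; field_simp; ring
  have hσp : σ p = w^(a+1) := by
    rw [hσ]
    simp only
    rw [hDp, h1p, hp]
    have e1 : (1/(1+x₀))/(x₀/(1+x₀)) = 1/x₀ := by
      field_simp
    rw [e1, div_pow, one_pow, div_mul_eq_mul_div, one_mul]
    have e2 : x₀^M = w^(a+1) * x₀^c := by
      rw [hw, ← pow_mul, ← pow_add]; congr 1; omega
    rw [e2, mul_div_assoc, div_self (pow_ne_zero c hx0ne), mul_one]
  -- conclude
  have hmem_u : u ∈ Set.Icc u p := Set.mem_Icc.mpr ⟨le_refl u, hup⟩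
  have hmem_p : p ∈ Set.Icc u p := Set.mem_Icc.mpr ⟨hup, le_refl p⟩
  have hσup := hanti hmem_u hmem_p hup
  rw [hσp] at hσup
  -- σ u ≥ w^(a+1)
  have hu1 : u < 1 := lt_of_le_of_lt hup hp1
  have hσu : w^(a+1) ≤ ((1-u)/u)^c * (D u)^M := hσup
  have key2 : w^(a+1) * u^c ≤ (1-u)^c * (D u)^M := by
    calc w^(a+1)*u^c ≤ (((1-u)/u)^c * (D u)^M) * u^c :=
          mul_le_mul_of_nonneg_right hσu (pow_nonneg hu0 c)
      _ = (1-u)^c * (D u)^M := by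
          rw [div_pow]
          field_simp
  have hsplitu : u^b = u^a * u^c := by rw [← pow_add]; congr 1; omega
  have hsplit1u : (1-u)^b = (1-u)^a * (1-u)^c := by rw [← pow_add]; congr 1; omega
  have hDuM : (w + u*(1-w))^(a+b+2) = (D u)^M := rfl
  calc w^(a+1) * ((1-u)^a * u^b) = (w^(a+1) * u^c) * ((1-u)^a * u^a) := by
        rw [hsplitu]; ring
    _ ≤ ((1-u)^c * (D u)^M) * ((1-u)^a * u^a) := by
        apply mul_le_mul_of_nonneg_right key2
        exact mul_nonneg (pow_nonneg (by linarith) a) (pow_nonneg hu0 a)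
    _ = (u^a * (1-u)^b) * (w + u*(1-w))^(a+b+2) := by
        rw [hsplit1u, hDuM]; ring

lemma beta_sub (a b : ℕ) (hab : a < b) :
    (∫ t in (((a:ℝ)+1)/((a:ℝ)+(b:ℝ)+1))..1, t^a * (1-t)^b)
      ≤ ∫ t in (0:ℝ)..(((a:ℝ)+1)/((a:ℝ)+(b:ℝ)+1)), t^a * (1-t)^b := by
  have hbpos : (0:ℝ) < b := by
    have : (1:ℝ) ≤ (b:ℝ) := by exact_mod_cast Nat.one_le_iff_ne_zero.mpr (by omega)
    linarith
  have hab' : (a:ℝ) + 1 ≤ (b:ℝ) := by exact_mod_cast hab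
  set x₀ : ℝ := ((a:ℝ)+1)/b with hx
  set w : ℝ := x₀^2 with hw
  set p : ℝ := x₀/(1+x₀) with hp
  have hx0 : 0 < x₀ := by rw [hx]; positivity
  have hx1 : x₀ ≤ 1 := by rw [hx, div_le_one hbpos]; linarith
  have hw0 : 0 < w := by rw [hw]; positivity
  have hp0 : 0 < p := by rw [hp]; positivity
  have hp1 : p < 1 := by rw [hp, div_lt_one (by linarith)]; linarith
  have hpeq : ((a:ℝ)+1)/((a:ℝ)+(b:ℝ)+1) = p := by
    rw [hp, hx]
    rw [div_eq_div_iff (by positivity) (ne_of_gt (by positivity : (0:ℝ) < 1 + ((a:ℝ)+1)/b))]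
    field_simp
    ring
  rw [hpeq]
  set D : ℝ → ℝ := fun y => w + y*(1-w) with hD
  have hDpos : ∀ y ∈ Set.Icc (0:ℝ) p, 0 < D y := by
    intro y hy
    have h1 : D y = w*(1-y) + y := by rw [hD]; ring
    rw [h1]
    have := hy.1; have := hy.2
    have : 0 < w*(1-y) := mul_pos hw0 (by nlinarith)
    nlinarith
  set φ : ℝ → ℝ := fun u => w*(1-u)/(D u) with hφ
  have huIcc : Set.uIcc (0:ℝ) p = Set.Icc 0 p := Set.uIcc_of_le (le_of_lt hp0)
  have hφderiv : ∀ u ∈ Set.uIcc (0:ℝ) p, HasDerivAt φ (-w/(D u)^2) u := by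
    intro u hu
    rw [huIcc] at hu
    have hDne : D u ≠ 0 := ne_of_gt (hDpos u hu)
    have hnumd : HasDerivAt (fun z : ℝ => w*(1-z)) (-w) u := by
      have := ((hasDerivAt_id u).const_sub 1).const_mul w
      simpa using this
    have hDd : HasDerivAt D (1-w) u := by
      simpa [hD] using ((hasDerivAt_id u).mul_const (1-w)).const_add w
    have h := hnumd.div hDd hDne
    have hnum : (-w * D u - w*(1-u)*(1-w))/(D u)^2 = -w/(D u)^2 := by
      have hDu : D u = w + u*(1-w) := rfl
      rw [hDu]
      congr 1
      ring
    rw [hnum] at h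
    exact h
  have hcontf : Continuous (fun t : ℝ => t^a * (1-t)^b) := by fun_prop
  have hcont' : ContinuousOn (fun u : ℝ => -w/(D u)^2) (Set.uIcc (0:ℝ) p) := by
    rw [huIcc]
    apply ContinuousOn.div
    · fun_prop
    · fun_prop
    · intro y hy; exact pow_ne_zero 2 (ne_of_gt (hDpos y hy))
  have hsub := intervalIntegral.integral_comp_smul_deriv hφderiv hcont' hcontf
  have hφ0 : φ 0 = 1 := by
    have hD0 : D 0 = w := by rw [hD]; ring
    rw [hφ]
    simp only
    rw [hD0]
    field_simp
    norm_num
  have hφp : φ p = p := by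
    have hDp : D p = x₀ := by
      rw [hD, hp, hw]; field_simp; ring
    rw [hφ]
    simp only
    rw [hDp, hp, hw]
    field_simp
    ring
  rw [hφ0, hφp] at hsub
  -- hsub : ∫ u in 0..p, (-w/(D u)^2) • f (φ u) = ∫ t in 1..p, f t
  have flip : (∫ t in p..1, t^a * (1-t)^b)
      = ∫ u in (0:ℝ)..p, (w/(D u)^2) * ((φ u)^a * (1-φ u)^b) := by
    rw [intervalIntegral.integral_symm 1 p, ← hsub, ← intervalIntegral.integral_neg]
    apply intervalIntegral.integral_congr
    intro u hu
    simp only [Function.comp, smul_eq_mul]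
    ring
  rw [flip]
  apply intervalIntegral.integral_mono_on (le_of_lt hp0)
  · apply ContinuousOn.intervalIntegrable
    rw [huIcc]
    apply ContinuousOn.mul
    · apply ContinuousOn.div continuousOn_const
      · fun_prop
      · intro y hy; exact pow_ne_zero 2 (ne_of_gt (hDpos y hy))
    · apply ContinuousOn.mul
      · apply ContinuousOn.pow
        apply ContinuousOn.div
        · fun_prop
        · fun_prop
        · intro y hy; exact ne_of_gt (hDpos y hy)
      · apply ContinuousOn.pow
        apply ContinuousOn.sub continuousOn_const
        apply ContinuousOn.div
        · fun_prop
        · fun_prop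
        · intro y hy; exact ne_of_gt (hDpos y hy)
  · exact (hcontf.intervalIntegrable _ _)
  · intro u hu
    have hDne : D u ≠ 0 := ne_of_gt (hDpos u hu)
    have hDupos : 0 < D u := hDpos u hu
    have hφu : φ u = w*(1-u)/(D u) := rfl
    have h1φ : 1 - φ u = u / D u := by
      rw [hφu]
      rw [eq_div_iff hDne]
      have hDu : D u = w + u*(1-w) := rfl
      field_simp
      rw [hDu]
      ring
    rw [hφu, h1φ, div_pow, div_pow, div_mul_div_comm, div_mul_div_comm]
    have hden : (D u)^2*((D u)^a*(D u)^b) = (D u)^(a+b+2) := by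
      rw [← pow_add, ← pow_add, show 2+(a+b) = a+b+2 from by omega]
    rw [hden, div_le_iff₀ (pow_pos hDupos _)]
    have hsp := sub_pointwise a b hab u hx hw hp hu.1 hu.2
    rw [mul_pow]
    linear_combination hsp

lemma beta_main (a b : ℕ) :
    (∫ t in (((a:ℝ)+1)/((a:ℝ)+(b:ℝ)+1))..1, t^a * (1-t)^b)
      ≤ ∫ t in (0:ℝ)..(((a:ℝ)+1)/((a:ℝ)+(b:ℝ)+1)), t^a * (1-t)^b := by
  rcases Nat.lt_or_ge a b with h | h
  · exact beta_sub a b h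
  · rcases Nat.eq_zero_or_pos b with rfl | hb
    · have h1 : ((a:ℝ)+((0:ℕ):ℝ)+1) = (a:ℝ)+1 := by norm_num
      have h2 : ((a:ℝ)+1)/((a:ℝ)+((0:ℕ):ℝ)+1) = 1 := by
        rw [h1, div_self (by positivity)]
      rw [h2, intervalIntegral.integral_same]
      apply intervalIntegral.integral_nonneg (by norm_num)
      intro u hu
      simp only [pow_zero, mul_one]
      exact pow_nonneg hu.1 a
    · exact beta_refl a b hb h

lemma half_le_Icc (n m : ℕ) (hm : 1 ≤ m) (hmn : m ≤ n) :
    1/2 ≤ ∑ k ∈ Finset.Icc m n, (n.choose k : ℝ) * ((m:ℝ)/n)^k * (1-(m:ℝ)/n)^(n-k) := by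
  have hn : 1 ≤ n := le_trans hm hmn
  have hnR : (0:ℝ) < n := by exact_mod_cast hn
  set p : ℝ := (m:ℝ)/n with hpdef
  have hp0 : 0 ≤ p := by positivity
  have hp1 : p ≤ 1 := by
    rw [hpdef, div_le_one hnR]; exact_mod_cast hmn
  set K : ℝ := (n:ℝ) * ((n-1).choose (m-1) : ℝ) with hK
  have hK0 : 0 ≤ K := by positivity
  have hcont : Continuous (fun t : ℝ => K * (t^(m-1) * (1-t)^(n-m))) := by fun_prop
  have hS : ∑ k ∈ Finset.Icc m n, (n.choose k : ℝ) * p^k * (1-p)^(n-k)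
      = ∫ t in (0:ℝ)..p, K * (t^(m-1) * (1-t)^(n-m)) := by
    rw [tailSum_eq_integral n m hm hmn p]
    apply intervalIntegral.integral_congr
    intro t _
    simp only [hK]
    ring
  have hT : (∫ t in (0:ℝ)..1, K * (t^(m-1) * (1-t)^(n-m))) = 1 := by
    calc (∫ t in (0:ℝ)..1, K * (t^(m-1)*(1-t)^(n-m)))
        = ∫ t in (0:ℝ)..1, (n:ℝ)*((n-1).choose (m-1):ℝ)*t^(m-1)*(1-t)^(n-m) := by
          apply intervalIntegral.integral_congr
          intro t _
          simp only [hK]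
          ring
      _ = ∑ k ∈ Finset.Icc m n, (n.choose k:ℝ)*(1:ℝ)^k*(1-(1:ℝ))^(n-k) :=
          (tailSum_eq_integral n m hm hmn 1).symm
      _ = 1 := tailSum_one n m hmn
  have hsplit : (∫ t in (0:ℝ)..p, K * (t^(m-1) * (1-t)^(n-m)))
      + (∫ t in p..1, K * (t^(m-1) * (1-t)^(n-m)))
      = ∫ t in (0:ℝ)..1, K * (t^(m-1) * (1-t)^(n-m)) :=
    intervalIntegral.integral_add_adjacent_intervals
      (hcont.intervalIntegrable _ _) (hcont.intervalIntegrable _ _)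
  -- beta_main instance
  have hcast1 : (((m-1:ℕ)):ℝ) = (m:ℝ) - 1 := by
    push_cast [Nat.cast_sub hm]; ring
  have hcast2 : (((n-m:ℕ)):ℝ) = (n:ℝ) - (m:ℝ) := by
    push_cast [Nat.cast_sub hmn]; ring
  have hq : (((m-1:ℕ):ℝ)+1)/(((m-1:ℕ):ℝ)+((n-m:ℕ):ℝ)+1) = p := by
    rw [hcast1, hcast2, hpdef]
    congr 1 <;> ring
  have hbeta := beta_main (m-1) (n-m)
  rw [hq] at hbeta
  have hbeta' : (∫ t in p..1, K * (t^(m-1) * (1-t)^(n-m)))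
      ≤ ∫ t in (0:ℝ)..p, K * (t^(m-1) * (1-t)^(n-m)) := by
    rw [intervalIntegral.integral_const_mul, intervalIntegral.integral_const_mul]
    apply mul_le_mul_of_nonneg_left _ hK0
    exact hbeta
  rw [hS]
  linarith [hT, hsplit, hbeta']

lemma Icc_le_half (n m : ℕ) (hm : 1 ≤ m) (hmn : m + 1 ≤ n) :
    ∑ k ∈ Finset.Icc (m+1) n, (n.choose k : ℝ) * ((m:ℝ)/n)^k * (1-(m:ℝ)/n)^(n-k) ≤ 1/2 := by
  have hn : 1 ≤ n := le_trans (by omega) hmn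
  have hnR : (0:ℝ) < n := by exact_mod_cast hn
  have hmR : (0:ℝ) < m := by exact_mod_cast hm
  set p : ℝ := (m:ℝ)/n with hpdef
  have hp0 : 0 ≤ p := by positivity
  have hp1 : p ≤ 1 := by
    rw [hpdef, div_le_one hnR]
    exact_mod_cast le_trans (by omega : m ≤ m+1) hmn
  set K : ℝ := (n:ℝ) * ((n-1).choose m : ℝ) with hK
  have hK0 : 0 ≤ K := by positivity
  set h : ℝ → ℝ := fun t => t^m * (1-t)^(n-m-1) with hh
  have hcont : Continuous (fun t : ℝ => K * h t) := by
    rw [hh]; fun_prop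
  have hr1 : (m+1) - 1 = m := by omega
  have hr2 : n - (m+1) = n - m - 1 := by omega
  have hS : ∑ k ∈ Finset.Icc (m+1) n, (n.choose k : ℝ) * p^k * (1-p)^(n-k)
      = ∫ t in (0:ℝ)..p, K * h t := by
    rw [tailSum_eq_integral n (m+1) (by omega) hmn p]
    apply intervalIntegral.integral_congr
    intro t _
    simp only [hK, hh, hr1, hr2]
    ring
  have hT : (∫ t in (0:ℝ)..1, K * h t) = 1 := by
    calc (∫ t in (0:ℝ)..1, K * h t)
        = ∫ t in (0:ℝ)..1, (n:ℝ)*((n-1).choose ((m+1)-1):ℝ)*t^((m+1)-1)*(1-t)^(n-(m+1)) := by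
          apply intervalIntegral.integral_congr
          intro t _
          simp only [hK, hh, hr1, hr2]
          ring
      _ = ∑ k ∈ Finset.Icc (m+1) n, (n.choose k:ℝ)*(1:ℝ)^k*(1-(1:ℝ))^(n-k) :=
          (tailSum_eq_integral n (m+1) (by omega) hmn 1).symm
      _ = 1 := tailSum_one n (m+1) hmn
  have hsplit : (∫ t in (0:ℝ)..p, K * h t) + (∫ t in p..1, K * h t)
      = ∫ t in (0:ℝ)..1, K * h t :=
    intervalIntegral.integral_add_adjacent_intervals
      (hcont.intervalIntegrable _ _) (hcont.intervalIntegrable _ _)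
  -- beta_main with a = n-m-1, b = m, then reflect
  set a : ℕ := n - m - 1 with ha
  have hcast1 : ((a:ℕ):ℝ) = (n:ℝ) - (m:ℝ) - 1 := by
    rw [ha]
    push_cast [Nat.cast_sub (by omega : 1 ≤ n - m), Nat.cast_sub (by omega : m ≤ n)]
    ring
  have hq : (((a:ℕ):ℝ)+1)/(((a:ℕ):ℝ)+((m:ℕ):ℝ)+1) = 1 - p := by
    rw [hcast1, hpdef]
    rw [eq_sub_iff_add_eq, div_add_div _ _ (by linarith : ((n:ℝ)-m-1)+(m:ℝ)+1 ≠ 0) (ne_of_gt hnR)]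
    rw [div_eq_one_iff_eq (by
      apply mul_ne_zero (by linarith : ((n:ℝ)-m-1)+(m:ℝ)+1 ≠ 0) (ne_of_gt hnR))]
    ring
  have hbeta := beta_main a m
  rw [hq] at hbeta
  -- reflect both integrals
  have hrefl1 : (∫ t in (1-p)..1, t^a * (1-t)^m) = ∫ t in (0:ℝ)..p, h t := by
    have hcomp := intervalIntegral.integral_comp_sub_left (a := 1-p) (b := 1)
      (fun t : ℝ => h t) 1
    calc (∫ t in (1-p)..1, t^a * (1-t)^m)
        = ∫ t in (1-p)..1, h (1 - t) := by
          apply intervalIntegral.integral_congr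
          intro t _
          simp only [hh, ha]
          ring_nf
      _ = ∫ t in (1-1:ℝ)..(1-(1-p)), h t := hcomp
      _ = ∫ t in (0:ℝ)..p, h t := by norm_num
  have hrefl2 : (∫ t in (0:ℝ)..(1-p), t^a * (1-t)^m) = ∫ t in p..1, h t := by
    have hcomp := intervalIntegral.integral_comp_sub_left (a := (0:ℝ)) (b := 1-p)
      (fun t : ℝ => h t) 1
    calc (∫ t in (0:ℝ)..(1-p), t^a * (1-t)^m)
        = ∫ t in (0:ℝ)..(1-p), h (1 - t) := by
          apply intervalIntegral.integral_congr
          intro t _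
          simp only [hh, ha]
          ring_nf
      _ = ∫ t in (1-(1-p))..(1-(0:ℝ)), h t := hcomp
      _ = ∫ t in p..1, h t := by norm_num
  rw [hrefl1, hrefl2] at hbeta
  -- hbeta : ∫ 0..p h ≤ ∫ p..1 h
  have hbeta' : (∫ t in (0:ℝ)..p, K * h t) ≤ ∫ t in p..1, K * h t := by
    rw [hh]
    rw [intervalIntegral.integral_const_mul, intervalIntegral.integral_const_mul]
    apply mul_le_mul_of_nonneg_left _ hK0
    simpa [hh] using hbeta
  rw [hS]
  linarith [hT, hsplit, hbeta']

lemma total_one (n : ℕ) (x : ℝ) :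
    ∑ k ∈ Finset.range (n+1), (n.choose k : ℝ) * x^k * (1-x)^(n-k) = 1 := by
  have h := add_pow x (1-x) n
  have h2 : ∑ k ∈ Finset.range (n+1), (n.choose k : ℝ) * x^k * (1-x)^(n-k)
      = ∑ k ∈ Finset.range (n+1), x^k * (1-x)^(n-k) * (n.choose k : ℝ) := by
    apply Finset.sum_congr rfl
    intro k _
    ring
  rw [h2, ← h]
  norm_num

theorem stmt4 (n m : ℕ) (hm : 1 ≤ m) (hmn : m ≤ n) :
    ((1 : ℝ) / 2 ≤ ∑ k ∈ Finset.range (m + 1),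
        (n.choose k : ℝ) * ((m : ℝ) / n) ^ k * (1 - (m : ℝ) / n) ^ (n - k)) ∧
    ((1 : ℝ) / 2 ≤ ∑ k ∈ Finset.Icc m n,
        (n.choose k : ℝ) * ((m : ℝ) / n) ^ k * (1 - (m : ℝ) / n) ^ (n - k)) ∧
    ((1 : ℝ) / 2 - (n.choose m : ℝ) * ((m : ℝ) / n) ^ m * (1 - (m : ℝ) / n) ^ (n - m) ≤
      ∑ k ∈ Finset.range m,
        (n.choose k : ℝ) * ((m : ℝ) / n) ^ k * (1 - (m : ℝ) / n) ^ (n - k)) := by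
  have hn : 1 ≤ n := le_trans hm hmn
  have hnR : (0:ℝ) < n := by exact_mod_cast hn
  have hs2 := half_le_Icc n m hm hmn
  have hs1 : (1:ℝ)/2 ≤ ∑ k ∈ Finset.range (m+1),
      (n.choose k : ℝ) * ((m:ℝ)/n)^k * (1-(m:ℝ)/n)^(n-k) := by
    rcases eq_or_lt_of_le hmn with rfl | hlt
    · -- m = n
      have h1 : (m:ℝ)/m = 1 := div_self (ne_of_gt (by exact_mod_cast hm))
      have hsum : ∑ k ∈ Finset.range (m+1),
          (m.choose k : ℝ) * ((m:ℝ)/m)^k * (1-(m:ℝ)/m)^(m-k) = 1 := by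
        rw [Finset.sum_eq_single m]
        · simp [h1]
        · intro k hk hkm
          have : k < m := by
            have := Finset.mem_range.mp hk
            omega
          rw [h1]
          simp [zero_pow (by omega : m - k ≠ 0)]
        · intro hnotmem
          exact absurd (Finset.mem_range.mpr (by omega)) hnotmem
      rw [hsum]
      norm_num
    · -- m < n
      have htot := total_one n ((m:ℝ)/n)
      have hsplitsum : ∑ k ∈ Finset.range (n+1),
            (n.choose k : ℝ) * ((m:ℝ)/n)^k * (1-(m:ℝ)/n)^(n-k)
          = (∑ k ∈ Finset.range (m+1), (n.choose k : ℝ) * ((m:ℝ)/n)^k * (1-(m:ℝ)/n)^(n-k))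
            + ∑ k ∈ Finset.Icc (m+1) n, (n.choose k : ℝ) * ((m:ℝ)/n)^k * (1-(m:ℝ)/n)^(n-k) := by
        rw [Finset.range_eq_Ico, ← Finset.Ico_add_one_right_eq_Icc (a := m+1)]
        rw [← Finset.sum_Ico_consecutive _ (by omega : 0 ≤ m+1) (by omega : m+1 ≤ n+1)]
        rw [Finset.range_eq_Ico]
      have hT := Icc_le_half n m hm (by omega)
      linarith
  refine ⟨hs1, hs2, ?_⟩
  have hstep := Finset.sum_range_succ
    (fun k => (n.choose k : ℝ) * ((m:ℝ)/n)^k * (1-(m:ℝ)/n)^(n-k)) m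
  rw [hstep] at hs1
  linarith
end

section
/- For n ≥ 4 and 1 ≤ m ≤ n-1, the central-type binomial probability C(n,m) (m/n)^m (1 - m/n)^{n-m} is at most sqrt(n / (6 m (n-m))). -/
open Stirling Real

lemma sqrt_pi_le_stirling' {k : ℕ} (hk : 1 ≤ k) : Real.sqrt Real.pi ≤ stirlingSeq k := by
  obtain ⟨j, rfl⟩ := Nat.exists_eq_add_of_le hk
  have h : Filter.Tendsto (fun n => stirlingSeq (n + 1)) Filter.atTop (nhds (Real.sqrt Real.pi)) :=
    tendsto_stirlingSeq_sqrt_pi.comp (Filter.tendsto_add_atTop_nat 1)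
  have := (stirlingSeq'_antitone).le_of_tendsto h j
  simpa [Nat.add_comm] using this

lemma stirling_le_four' {k : ℕ} (hk : 4 ≤ k) : stirlingSeq k ≤ stirlingSeq 4 := by
  obtain ⟨j, rfl⟩ := Nat.exists_eq_add_of_le hk
  have := stirlingSeq'_antitone (show 3 ≤ j + 3 by omega)
  simp only [Function.comp_apply] at this
  convert this using 2
  · rfl
  · omega

lemma stirling_four_le' : stirlingSeq 4 ≤ Real.sqrt (1/3) * Real.pi := by
  have h1 : (0:ℝ) ≤ stirlingSeq 4 := (stirlingSeq'_pos 3).le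
  have h2 : (0:ℝ) ≤ Real.sqrt (1/3) * Real.pi := by positivity
  have hsq : stirlingSeq 4 ^ 2 ≤ (Real.sqrt (1/3) * Real.pi) ^ 2 := by
    rw [mul_pow, Real.sq_sqrt (by norm_num : (0:ℝ) ≤ 1/3)]
    have hsval : stirlingSeq 4 ^ 2 = 9 * rexp 8 / 8192 := by
      rw [stirlingSeq]
      rw [div_pow, mul_pow, Real.sq_sqrt (by positivity), div_pow]
      norm_num [Nat.factorial]
      rw [eq_div_iff (by norm_num)]
      have h : rexp 4 ^ 2 = rexp 8 := by rw [sq, ← Real.exp_add]; norm_num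
      rw [div_pow, h]
      have : rexp 8 ≠ 0 := (Real.exp_pos 8).ne'
      field_simp
      ring
    rw [hsval]
    have hE8 : rexp 8 ≤ (2.7182818286:ℝ) ^ 8 := by
      rw [show (8:ℝ) = (8:ℕ) * 1 by norm_num, Real.exp_nat_mul]
      exact pow_le_pow_left₀ (Real.exp_pos 1).le Real.exp_one_lt_d9.le 8
    have hP2 : (3.141592:ℝ) ^ 2 ≤ Real.pi ^ 2 :=
      pow_le_pow_left₀ (by norm_num) Real.pi_gt_d6.le 2
    have hc1 : (2.7182818286:ℝ) ^ 8 ≤ 2980.96 := by norm_num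
    have hc2 : (9.86958:ℝ) ≤ (3.141592:ℝ) ^ 2 := by norm_num
    nlinarith [hE8, hP2, hc1, hc2]
  calc stirlingSeq 4 = Real.sqrt (stirlingSeq 4 ^ 2) := (Real.sqrt_sq h1).symm
    _ ≤ Real.sqrt ((Real.sqrt (1/3) * Real.pi) ^ 2) := Real.sqrt_le_sqrt hsq
    _ = _ := Real.sqrt_sq h2

lemma fact_eq_stirling {j : ℕ} (hj : 1 ≤ j) :
    ((Nat.factorial j : ℕ) : ℝ) = stirlingSeq j * (Real.sqrt (2 * j) * ((j : ℝ) / rexp 1) ^ j) := by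
  have hj0 : (0:ℝ) < (j:ℝ) := by exact_mod_cast hj
  rw [stirlingSeq, div_mul_cancel₀]
  positivity

lemma key_eq (m k : ℕ) (hm : 1 ≤ m) (hk : 1 ≤ k) :
    (((m + k).choose m : ℕ) : ℝ) * ((m : ℝ) / (m + k)) ^ m * ((k : ℝ) / (m + k)) ^ k =
      stirlingSeq (m + k) / (stirlingSeq m * stirlingSeq k) *
        Real.sqrt (((m : ℝ) + k) / (2 * m * k)) := by
  have hm0 : (0:ℝ) < (m:ℝ) := by exact_mod_cast hm
  have hk0 : (0:ℝ) < (k:ℝ) := by exact_mod_cast hk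
  have hn0 : (0:ℝ) < (m:ℝ) + k := by linarith
  have hE : (0:ℝ) < rexp 1 := Real.exp_pos 1
  have hA : 0 < stirlingSeq (m + k) := by
    have := stirlingSeq'_pos (m + k - 1); rwa [Nat.sub_add_cancel (by omega)] at this
  have hB : 0 < stirlingSeq m := by
    have := stirlingSeq'_pos (m - 1); rwa [Nat.sub_add_cancel hm] at this
  have hC : 0 < stirlingSeq k := by
    have := stirlingSeq'_pos (k - 1); rwa [Nat.sub_add_cancel hk] at this
  -- choose in terms of factorials
  have hfm : (0:ℝ) < (Nat.factorial m : ℝ) := by exact_mod_cast Nat.factorial_pos m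
  have hfk : (0:ℝ) < (Nat.factorial k : ℝ) := by exact_mod_cast Nat.factorial_pos k
  have hcast : (((m + k).choose m : ℕ) : ℝ) * (Nat.factorial m : ℝ) * (Nat.factorial k : ℝ) =
      (Nat.factorial (m + k) : ℝ) := by
    rw [Nat.choose_symm_add]
    exact_mod_cast congrArg (Nat.cast (R := ℝ)) (Nat.add_choose_mul_factorial_mul_factorial m k)
  have hchoose : (((m + k).choose m : ℕ) : ℝ) =
      (Nat.factorial (m + k) : ℝ) / ((Nat.factorial m : ℝ) * (Nat.factorial k : ℝ)) := by
    rw [eq_div_iff (by positivity), ← hcast]; ring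
  rw [hchoose, fact_eq_stirling (show 1 ≤ m + k by omega), fact_eq_stirling hm,
    fact_eq_stirling hk]
  push_cast
  -- sqrt identity
  have f2 : Real.sqrt (2 * ((m:ℝ) + k)) / (Real.sqrt (2 * m) * Real.sqrt (2 * k)) =
      Real.sqrt (((m:ℝ) + k) / (2 * m * k)) := by
    rw [← Real.sqrt_mul (by positivity), ← Real.sqrt_div (by positivity)]
    congr 1
    field_simp
  -- power identity
  have f1 : (((m:ℝ) + k) / rexp 1) ^ (m + k) * ((m:ℝ) / ((m:ℝ) + k)) ^ m *
      ((k:ℝ) / ((m:ℝ) + k)) ^ k = ((m:ℝ) / rexp 1) ^ m * ((k:ℝ) / rexp 1) ^ k := by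
    simp only [div_pow, pow_add]
    field_simp
  have hPN : (0:ℝ) < (((m:ℝ) + k) / rexp 1) ^ (m + k) := by positivity
  have hq : ((m:ℝ) / ((m:ℝ) + k)) ^ m * ((k:ℝ) / ((m:ℝ) + k)) ^ k =
      (((m:ℝ) / rexp 1) ^ m * ((k:ℝ) / rexp 1) ^ k) / (((m:ℝ) + k) / rexp 1) ^ (m + k) := by
    rw [eq_div_iff hPN.ne']
    linarith [f1]
  rw [← f2, mul_assoc, hq]
  have h1 : Real.sqrt (2 * ((m:ℝ) + k)) > 0 := by positivity
  have h2 : Real.sqrt (2 * (m:ℝ)) > 0 := by positivity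
  have h3 : Real.sqrt (2 * (k:ℝ)) > 0 := by positivity
  have hPM : (0:ℝ) < ((m:ℝ) / rexp 1) ^ m := by positivity
  have hPK : (0:ℝ) < ((k:ℝ) / rexp 1) ^ k := by positivity
  field_simp

theorem stmt5 (n m : ℕ) (hn : 4 ≤ n) (hm : 1 ≤ m) (hmn : m ≤ n - 1) :
    (n.choose m : ℝ) * ((m : ℝ) / n) ^ m * (1 - (m : ℝ) / n) ^ (n - m) ≤
      Real.sqrt ((n : ℝ) / (6 * m * ((n : ℝ) - m))) := by
  obtain ⟨k, rfl⟩ : ∃ k, n = m + k := ⟨n - m, by omega⟩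
  have hk : 1 ≤ k := by omega
  have hm0 : (0:ℝ) < (m:ℝ) := by exact_mod_cast hm
  have hk0 : (0:ℝ) < (k:ℝ) := by exact_mod_cast hk
  have hn0 : (0:ℝ) < (m:ℝ) + k := by linarith
  have hsub : m + k - m = k := by omega
  have hcast : ((m + k : ℕ) : ℝ) = (m:ℝ) + k := by push_cast; ring
  have h1m : 1 - (m:ℝ) / ((m:ℕ) + k : ℕ) = (k:ℝ) / ((m:ℝ) + k) := by
    rw [hcast]
    field_simp
    ring
  rw [hsub, hcast] at *
  have hgoal1 : ((m + k : ℕ):ℝ) - (m:ℝ) = (k:ℝ) := by push_cast; ring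
  rw [h1m, show (m:ℝ) + (k:ℝ) - (m:ℝ) = (k:ℝ) by ring]
  rw [key_eq m k hm hk]
  -- bound the stirling ratio
  have hB : Real.sqrt Real.pi ≤ stirlingSeq m := sqrt_pi_le_stirling' hm
  have hC : Real.sqrt Real.pi ≤ stirlingSeq k := sqrt_pi_le_stirling' hk
  have hA : stirlingSeq (m + k) ≤ Real.sqrt (1/3) * Real.pi :=
    (stirling_le_four' (by omega)).trans stirling_four_le'
  have hpi : (0:ℝ) < Real.sqrt Real.pi := Real.sqrt_pos.mpr Real.pi_pos
  have hBC : Real.pi ≤ stirlingSeq m * stirlingSeq k := by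
    calc Real.pi = Real.sqrt Real.pi * Real.sqrt Real.pi := (Real.mul_self_sqrt Real.pi_pos.le).symm
      _ ≤ stirlingSeq m * stirlingSeq k := mul_le_mul hB hC hpi.le (hpi.le.trans hB)
  have hApos : 0 ≤ stirlingSeq (m + k) := by
    have := stirlingSeq'_pos (m + k - 1)
    rw [Nat.sub_add_cancel (by omega)] at this
    exact this.le
  have hratio : stirlingSeq (m + k) / (stirlingSeq m * stirlingSeq k) ≤ Real.sqrt (1/3) := by
    have h := div_le_div₀ (by positivity : (0:ℝ) ≤ Real.sqrt (1/3) * Real.pi) hA Real.pi_pos hBC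
    rwa [mul_div_assoc, div_self Real.pi_ne_zero, mul_one] at h
  have hs : Real.sqrt (1/3) * Real.sqrt (((m:ℝ) + k) / (2 * m * k)) =
      Real.sqrt (((m:ℝ) + k) / (6 * m * k)) := by
    rw [← Real.sqrt_mul (by norm_num), div_mul_div_comm, one_mul]
    congr 1
    ring
  calc stirlingSeq (m + k) / (stirlingSeq m * stirlingSeq k) *
        Real.sqrt (((m:ℝ) + k) / (2 * m * k))
      ≤ Real.sqrt (1/3) * Real.sqrt (((m:ℝ) + k) / (2 * m * k)) :=
        mul_le_mul_of_nonneg_right hratio (Real.sqrt_nonneg _)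
    _ = Real.sqrt (((m:ℝ) + k) / (6 * m * k)) := hs
end

section
/- For positive integers m and n with m ≤ n, the ratio n(n-1)···(n-m+1)/n^m is at least exp(-m·r·(1+r)/2) where r = m/n, provided r ≤ 1/2. -/
lemma key_exp (x : ℝ) (h0 : 0 ≤ x) (h1 : x ≤ 1/2) :
    Real.exp (-(x + x^2)) ≤ 1 - x := by
  set t : ℝ := x + x^2 with ht
  have htn : 0 ≤ t := by nlinarith
  have h2 : 1 + t + t^2/2 ≤ Real.exp t := Real.quadratic_le_exp_of_nonneg htn
  have hpos : (0:ℝ) < 1 + t + t^2/2 := by nlinarith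
  rw [Real.exp_neg, inv_eq_one_div]
  calc 1 / Real.exp t ≤ 1 / (1 + t + t^2/2) :=
        one_div_le_one_div_of_le hpos h2
    _ ≤ 1 - x := by
        rw [div_le_iff₀ hpos]
        nlinarith [sq_nonneg x, sq_nonneg (1-x)]

theorem stmt6 (n m : ℕ) (hm : 1 ≤ m) (hmn : m ≤ n) (hr : (m : ℝ) / n ≤ 1 / 2) :
    Real.exp (-(m : ℝ) * ((m : ℝ) / n) * (1 + (m : ℝ) / n) / 2) ≤
      (∏ k ∈ Finset.range m, ((n : ℝ) - k)) / (n : ℝ) ^ m := by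
  have hn : 0 < n := lt_of_lt_of_le hm hmn
  have hN : (0:ℝ) < n := by exact_mod_cast hn
  have hmn' : (m:ℝ) ≤ n := by exact_mod_cast hmn
  have hprod : (∏ k ∈ Finset.range m, ((n : ℝ) - k)) / (n : ℝ) ^ m
      = ∏ k ∈ Finset.range m, (1 - (k:ℝ)/n) := by
    have hpow : (n:ℝ)^m = ∏ _k ∈ Finset.range m, (n:ℝ) := by
      rw [Finset.prod_const, Finset.card_range]
    rw [hpow, ← Finset.prod_div_distrib]
    apply Finset.prod_congr rfl
    intro k _
    field_simp
  rw [hprod]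
  have hterm : ∀ k ∈ Finset.range m,
      Real.exp (-((k:ℝ)/n + ((k:ℝ)/n)^2)) ≤ 1 - (k:ℝ)/n := by
    intro k hk
    have hk' : k < m := Finset.mem_range.mp hk
    have hk0 : (0:ℝ) ≤ (k:ℝ)/n := by positivity
    have hkm : (k:ℝ) ≤ (m:ℝ) := by exact_mod_cast hk'.le
    have hle : (k:ℝ)/n ≤ (m:ℝ)/n := by gcongr
    exact key_exp _ hk0 (hle.trans hr)
  have h1 : Real.exp (∑ k ∈ Finset.range m, -((k:ℝ)/n + ((k:ℝ)/n)^2))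
      ≤ ∏ k ∈ Finset.range m, (1 - (k:ℝ)/n) := by
    rw [Real.exp_sum]
    apply Finset.prod_le_prod
    · intro k _; positivity
    · exact hterm
  refine le_trans ?_ h1
  apply Real.exp_le_exp.mpr
  -- sum bound
  have hA : (∑ k ∈ Finset.range m, (k:ℝ)) = (m:ℝ) * ((m:ℝ) - 1) / 2 := by
    have := Finset.sum_range_id_mul_two m
    have h2 := congrArg (Nat.cast : ℕ → ℝ) this
    push_cast [Nat.cast_sub hm] at h2
    linarith
  have hsq : ∑ k ∈ Finset.range m, (k:ℝ)^2
      ≤ ((m:ℝ) - 1) * ∑ k ∈ Finset.range m, (k:ℝ) := by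
    rw [Finset.mul_sum]
    apply Finset.sum_le_sum
    intro k hk
    have hk' : k < m := Finset.mem_range.mp hk
    have : (k:ℝ) ≤ (m:ℝ) - 1 := by
      have : (k:ℝ) + 1 ≤ (m:ℝ) := by exact_mod_cast hk'
      linarith
    have hk0 : (0:ℝ) ≤ k := Nat.cast_nonneg k
    nlinarith
  have hsum : ∑ k ∈ Finset.range m, ((k:ℝ)/n + ((k:ℝ)/n)^2)
      ≤ (m:ℝ) * ((m:ℝ)/n) * (1 + (m:ℝ)/n) / 2 := by
    have hsplit : ∑ k ∈ Finset.range m, ((k:ℝ)/n + ((k:ℝ)/n)^2)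
        = (∑ k ∈ Finset.range m, (k:ℝ)) / n
          + (∑ k ∈ Finset.range m, (k:ℝ)^2) / n^2 := by
      rw [Finset.sum_div, Finset.sum_div, ← Finset.sum_add_distrib]
      exact Finset.sum_congr rfl fun k _ => by rw [div_pow]
    have hB : (∑ k ∈ Finset.range m, (k:ℝ)^2) ≤ ((m:ℝ)-1) * ((m:ℝ) * ((m:ℝ) - 1) / 2) := by
      rw [← hA]; exact hsq
    have hm1 : (1:ℝ) ≤ m := by exact_mod_cast hm
    have heq : (m:ℝ) * ((m:ℝ)/n) * (1 + (m:ℝ)/n) / 2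
        = (m:ℝ)^2/(2*n) + (m:ℝ)^3/(2*(n:ℝ)^2) := by
      field_simp
    rw [hsplit, hA, heq]
    have e1 : (m:ℝ) * ((m:ℝ) - 1) / 2 / n ≤ (m:ℝ)^2/(2*n) := by
      rw [div_div]
      gcongr
      nlinarith
    have e2 : (∑ k ∈ Finset.range m, (k:ℝ)^2) / (n:ℝ)^2 ≤ (m:ℝ)^3/(2*(n:ℝ)^2) := by
      rw [show (m:ℝ)^3/(2*(n:ℝ)^2) = ((m:ℝ)^3/2)/(n:ℝ)^2 from (div_div _ _ _).symm]
      gcongr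
      nlinarith
    linarith
  have hneg : (∑ k ∈ Finset.range m, -((k:ℝ)/n + ((k:ℝ)/n)^2))
      = -(∑ k ∈ Finset.range m, ((k:ℝ)/n + ((k:ℝ)/n)^2)) := by
    rw [Finset.sum_neg_distrib]
  rw [hneg]
  have : -(m:ℝ) * ((m:ℝ)/n) * (1 + (m:ℝ)/n) / 2
      = -((m:ℝ) * ((m:ℝ)/n) * (1 + (m:ℝ)/n) / 2) := by ring
  rw [this]
  exact neg_le_neg hsum
end

section
/- For every integer m ≥ 1, ∑_{k=0}^{m-1} ( e · m^k / k! − (m+1)^k / k! ) < (m+1)^m / m!. -/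
open Finset

noncomputable def S (n : ℕ) : ℝ := ∑ i ∈ range n, 1 / (Nat.factorial i)

lemma S_lt_exp (n : ℕ) : S n < Real.exp 1 := by
  have h1 : S n + 1 / (Nat.factorial n) ≤ Real.exp 1 := by
    have := Real.sum_le_exp_of_nonneg (x := 1) zero_le_one (n + 1)
    simpa [S, Finset.sum_range_succ] using this
  have h2 : (0:ℝ) < 1 / (Nat.factorial n) := by positivity
  linarith

lemma Q (m : ℕ) : ∑ r ∈ range m, (Real.exp 1 - S (r + 2)) =
    1 - 1 / (Nat.factorial (m + 1)) + m * (Real.exp 1 - S (m + 2)) := by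
  induction m with
  | zero => simp [S, Nat.factorial]
  | succ m ih =>
    rw [Finset.sum_range_succ, ih]
    have hS : S (m + 3) = S (m + 2) + 1 / (Nat.factorial (m + 2)) := by
      simp [S, Finset.sum_range_succ]
    have hf2 : (Nat.factorial (m + 2) : ℝ) = (m + 2) * Nat.factorial (m + 1) := by
      push_cast [Nat.factorial_succ]; ring
    have hpos1 : (Nat.factorial (m + 1) : ℝ) > 0 := by positivity
    have hpos2 : (Nat.factorial (m + 2) : ℝ) > 0 := by positivity
    rw [hS, hf2]
    field_simp
    push_cast
    ring

lemma sumR_lt_one (m : ℕ) : ∑ r ∈ range m, (Real.exp 1 - S (r + 2)) < 1 := by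
  rw [Q]
  have hb : Real.exp 1 - S (m + 2) ≤ ((m:ℝ) + 3) / (Nat.factorial (m + 2) * ((m:ℝ) + 2)) := by
    have h := Real.exp_bound (x := 1) (by norm_num) (n := m + 2) (by omega)
    rw [abs_le] at h
    have h2 := h.2
    simp only [one_pow, abs_one, one_mul] at h2
    simp only [S]
    exact h2.trans (le_of_eq (by push_cast; ring))
  have hfpos : (0:ℝ) < Nat.factorial (m + 1) := by positivity
  have hf2 : (Nat.factorial (m + 2) : ℝ) = ((m:ℝ) + 2) * Nat.factorial (m + 1) := by
    push_cast [Nat.factorial_succ]; ring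
  have hkey : (m:ℝ) * (((m:ℝ) + 3) / (Nat.factorial (m + 2) * ((m:ℝ) + 2))) <
      1 / (Nat.factorial (m + 1)) := by
    have he : (m:ℝ) * (((m:ℝ) + 3) / (Nat.factorial (m + 2) * ((m:ℝ) + 2))) =
        ((m:ℝ) * ((m:ℝ) + 3)) / ((((m:ℝ) + 2) * ((m:ℝ) + 2)) * Nat.factorial (m + 1)) := by
      rw [hf2]; ring
    rw [he, div_lt_div_iff₀ (by positivity) hfpos]
    have hm0 : (0:ℝ) ≤ m := Nat.cast_nonneg m
    nlinarith
  have hm0 : (0:ℝ) ≤ m := Nat.cast_nonneg m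
  have := mul_le_mul_of_nonneg_left hb hm0
  nlinarith

lemma coeff_le (m r : ℕ) (hr : r < m) :
    (m:ℝ) ^ (m - 1 - r) / (Nat.factorial (m - 1 - r)) ≤ (m:ℝ) ^ m / (Nat.factorial m) := by
  have h1 : r + 1 ≤ m := hr
  have hnat : Nat.factorial m ≤ Nat.factorial (m - 1 - r) * m ^ (r + 1) := by
    have hd := Nat.factorial_mul_descFactorial h1
    have : m - (r + 1) = m - 1 - r := by omega
    rw [this] at hd
    calc Nat.factorial m = Nat.factorial (m - 1 - r) * m.descFactorial (r + 1) := hd.symm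
      _ ≤ Nat.factorial (m - 1 - r) * m ^ (r + 1) :=
          Nat.mul_le_mul_left _ (Nat.descFactorial_le_pow m (r + 1))
  have hexp : (m - 1 - r) + (r + 1) = m := by omega
  rw [div_le_div_iff₀ (by positivity) (by positivity)]
  calc (m:ℝ) ^ (m - 1 - r) * Nat.factorial m
      ≤ (m:ℝ) ^ (m - 1 - r) * (Nat.factorial (m - 1 - r) * (m:ℝ) ^ (r + 1)) := by
        have := (Nat.cast_le (α := ℝ)).mpr hnat
        push_cast at this
        exact mul_le_mul_of_nonneg_left this (by positivity)
    _ = (m:ℝ) ^ m * Nat.factorial (m - 1 - r) := by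
        have hp : (m:ℝ) ^ m = (m:ℝ) ^ (m - 1 - r) * (m:ℝ) ^ (r + 1) := by
          rw [← pow_add, hexp]
        rw [hp]; ring

lemma binom_flip (m : ℕ) :
    ∑ k ∈ range (m + 1), ((m:ℝ) + 1) ^ k / (Nat.factorial k) =
      ∑ j ∈ range (m + 1), (m:ℝ) ^ j / (Nat.factorial j) * S (m + 1 - j) := by
  have step : ∀ k : ℕ, ((m:ℝ) + 1) ^ k / (Nat.factorial k) =
      ∑ j ∈ range (k + 1), ((m:ℝ) ^ j / (Nat.factorial j)) * (1 / (Nat.factorial (k - j))) := by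
    intro k
    rw [add_pow]
    rw [Finset.sum_div]
    apply Finset.sum_congr rfl
    intro j hj
    have hjk : j ≤ k := Nat.lt_succ_iff.mp (Finset.mem_range.mp hj)
    have hc : (Nat.choose k j : ℝ) * (Nat.factorial j) * (Nat.factorial (k - j)) =
        (Nat.factorial k) := by
      exact_mod_cast congrArg (Nat.cast (R := ℝ)) (Nat.choose_mul_factorial_mul_factorial hjk)
    have h1 : (0:ℝ) < Nat.factorial j := by positivity
    have h2 : (0:ℝ) < Nat.factorial (k - j) := by positivity
    have h3 : (0:ℝ) < Nat.factorial k := by positivity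
    simp only [one_pow, mul_one]
    rw [div_mul_div_comm, mul_one]
    rw [div_eq_div_iff h3.ne' (by positivity)]
    linear_combination ((m:ℝ) ^ j) * hc
  calc ∑ k ∈ range (m + 1), ((m:ℝ) + 1) ^ k / (Nat.factorial k)
      = ∑ k ∈ range (m + 1), ∑ j ∈ range (k + 1),
          ((m:ℝ) ^ j / (Nat.factorial j)) * (1 / (Nat.factorial (k - j))) :=
        Finset.sum_congr rfl fun k _ => step k
    _ = ∑ j ∈ range (m + 1), ∑ i ∈ range (m + 1 - j),
          ((m:ℝ) ^ j / (Nat.factorial j)) * (1 / (Nat.factorial i)) :=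
        Finset.sum_range_diag_flip (m + 1)
          (fun j i => ((m:ℝ) ^ j / (Nat.factorial j)) * (1 / (Nat.factorial i)))
    _ = ∑ j ∈ range (m + 1), (m:ℝ) ^ j / (Nat.factorial j) * S (m + 1 - j) := by
        refine Finset.sum_congr rfl fun j _ => ?_
        rw [← Finset.mul_sum]
        rfl

theorem stmt7 (m : ℕ) (hm : 1 ≤ m) :
    ∑ k ∈ Finset.range m,
        (Real.exp 1 * (m : ℝ) ^ k / (Nat.factorial k) -
          ((m : ℝ) + 1) ^ k / (Nat.factorial k)) <
      ((m : ℝ) + 1) ^ m / (Nat.factorial m) := by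
  have hmpos : (0:ℝ) < m := by exact_mod_cast hm
  have hCpos : (0:ℝ) < (m:ℝ) ^ m / (Nat.factorial m) := by positivity
  -- key inequality
  have key : ∑ j ∈ range m, (m:ℝ) ^ j / (Nat.factorial j) * (Real.exp 1 - S (m + 1 - j)) <
      (m:ℝ) ^ m / (Nat.factorial m) := by
    have hrefl := Finset.sum_range_reflect
      (fun j => (m:ℝ) ^ j / (Nat.factorial j) * (Real.exp 1 - S (m + 1 - j))) m
    rw [← hrefl]
    calc ∑ r ∈ range m, (m:ℝ) ^ (m - 1 - r) / (Nat.factorial (m - 1 - r)) *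
            (Real.exp 1 - S (m + 1 - (m - 1 - r)))
        = ∑ r ∈ range m, (m:ℝ) ^ (m - 1 - r) / (Nat.factorial (m - 1 - r)) *
            (Real.exp 1 - S (r + 2)) := by
          refine Finset.sum_congr rfl fun r hr => ?_
          have : m + 1 - (m - 1 - r) = r + 2 := by
            have := Finset.mem_range.mp hr; omega
          rw [this]
      _ ≤ ∑ r ∈ range m, (m:ℝ) ^ m / (Nat.factorial m) * (Real.exp 1 - S (r + 2)) := by
          refine Finset.sum_le_sum fun r hr => ?_
          have h1 := coeff_le m r (Finset.mem_range.mp hr)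
          have h2 : (0:ℝ) ≤ Real.exp 1 - S (r + 2) := le_of_lt (by linarith [S_lt_exp (r + 2)])
          exact mul_le_mul_of_nonneg_right h1 h2
      _ = (m:ℝ) ^ m / (Nat.factorial m) * ∑ r ∈ range m, (Real.exp 1 - S (r + 2)) := by
          rw [Finset.mul_sum]
      _ < (m:ℝ) ^ m / (Nat.factorial m) * 1 :=
          mul_lt_mul_of_pos_left (sumR_lt_one m) hCpos
      _ = (m:ℝ) ^ m / (Nat.factorial m) := mul_one _
  -- rearrange the goal
  rw [Finset.sum_sub_distrib, sub_lt_iff_lt_add, add_comm, ← Finset.sum_range_succ]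
  rw [binom_flip, Finset.sum_range_succ]
  have hS1 : S (m + 1 - m) = 1 := by
    have : m + 1 - m = 1 := by omega
    rw [this]; simp [S, Nat.factorial]
  rw [hS1, mul_one]
  have hL : ∑ k ∈ range m, Real.exp 1 * (m:ℝ) ^ k / (Nat.factorial k) =
      ∑ j ∈ range m, ((m:ℝ) ^ j / (Nat.factorial j) * S (m + 1 - j) +
        (m:ℝ) ^ j / (Nat.factorial j) * (Real.exp 1 - S (m + 1 - j))) := by
    refine Finset.sum_congr rfl fun j _ => ?_
    ring
  rw [hL, Finset.sum_add_distrib]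
  linarith [key]
end

section
/- For real 0 < r < 1 and integers m ≥ 1, n ≥ 1 with r = m/n and r' = (m+1)/n < 1: (m+1)·∑_{i≥1} r'^i/(i+1) − m·∑_{i≥1} r^i/(i+1) ≤ (r(1+r') + r')/(2(1−r')). -/
private lemma pair_le (a b : ℝ) (hb : 0 ≤ b) (hab : b ≤ a) (p q : ℕ) :
    a ^ p * b ^ q + a ^ q * b ^ p ≤ a ^ (p + q) + b ^ (p + q) := by
  have h1 : b ^ p ≤ a ^ p := pow_le_pow_left₀ hb hab p
  have h2 : b ^ q ≤ a ^ q := pow_le_pow_left₀ hb hab q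
  have h3 : 0 ≤ (a ^ p - b ^ p) * (a ^ q - b ^ q) :=
    mul_nonneg (sub_nonneg.2 h1) (sub_nonneg.2 h2)
  rw [pow_add, pow_add]
  nlinarith

private lemma key_pow (a b : ℝ) (hb : 0 ≤ b) (hab : b ≤ a) (k : ℕ) :
    a ^ k - b ^ k ≤ (k : ℝ) * (a - b) * (a ^ (k - 1) + b ^ (k - 1)) / 2 := by
  have hsum : ∑ j ∈ Finset.range k, a ^ j * b ^ (k - 1 - j)
      ≤ (k : ℝ) * (a ^ (k - 1) + b ^ (k - 1)) / 2 := by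
    have hrefl := Finset.sum_range_reflect (fun j => a ^ j * b ^ (k - 1 - j)) k
    have h2 : (2 : ℝ) * ∑ j ∈ Finset.range k, a ^ j * b ^ (k - 1 - j)
        ≤ (k : ℝ) * (a ^ (k - 1) + b ^ (k - 1)) := by
      have he : (2 : ℝ) * ∑ j ∈ Finset.range k, a ^ j * b ^ (k - 1 - j)
          = ∑ j ∈ Finset.range k,
            (a ^ j * b ^ (k - 1 - j) + a ^ (k - 1 - j) * b ^ (k - 1 - (k - 1 - j))) := by
        rw [Finset.sum_add_distrib, ← hrefl]
        ring
      rw [he]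
      calc ∑ j ∈ Finset.range k,
            (a ^ j * b ^ (k - 1 - j) + a ^ (k - 1 - j) * b ^ (k - 1 - (k - 1 - j)))
          ≤ ∑ _j ∈ Finset.range k, (a ^ (k - 1) + b ^ (k - 1)) := by
            apply Finset.sum_le_sum
            intro j hj
            rw [Finset.mem_range] at hj
            have hj1 : k - 1 - (k - 1 - j) = j := by omega
            have hj2 : j + (k - 1 - j) = k - 1 := by omega
            rw [hj1]
            calc a ^ j * b ^ (k - 1 - j) + a ^ (k - 1 - j) * b ^ j
                ≤ a ^ (j + (k - 1 - j)) + b ^ (j + (k - 1 - j)) :=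
                  pair_le a b hb hab j (k - 1 - j)
              _ = a ^ (k - 1) + b ^ (k - 1) := by rw [hj2]
        _ = (k : ℝ) * (a ^ (k - 1) + b ^ (k - 1)) := by
            rw [Finset.sum_const, Finset.card_range, nsmul_eq_mul]
    linarith
  have hgeom := geom_sum₂_mul a b k
  have hab' : 0 ≤ a - b := sub_nonneg.2 hab
  calc a ^ k - b ^ k = (∑ j ∈ Finset.range k, a ^ j * b ^ (k - 1 - j)) * (a - b) := hgeom.symm
    _ ≤ ((k : ℝ) * (a ^ (k - 1) + b ^ (k - 1)) / 2) * (a - b) :=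
        mul_le_mul_of_nonneg_right hsum hab'
    _ = (k : ℝ) * (a - b) * (a ^ (k - 1) + b ^ (k - 1)) / 2 := by ring

private lemma summable_aux (c x : ℝ) (hc : 0 ≤ c) (hx0 : 0 ≤ x) (hx1 : x < 1) :
    Summable (fun i : ℕ => c * x ^ (i + 2) / ((i : ℝ) + 2)) := by
  have hmaj : Summable (fun i : ℕ => (c * x ^ 2) * x ^ i) :=
    (summable_geometric_of_lt_one hx0 hx1).mul_left (c * x ^ 2)
  refine Summable.of_nonneg_of_le (fun i => by positivity) (fun i => ?_) hmaj
  have h1 : c * x ^ (i + 2) / ((i : ℝ) + 2) ≤ c * x ^ (i + 2) := by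
    apply div_le_self (by positivity)
    have : (0:ℝ) ≤ (i:ℝ) := Nat.cast_nonneg i
    linarith
  have h2 : c * x ^ (i + 2) = (c * x ^ 2) * x ^ i := by ring
  linarith [h1, h2.le]

theorem stmt15 (m n : ℕ) (hm : 1 ≤ m) (hn : 1 ≤ n) (r r' : ℝ)
    (hr : r = (m : ℝ) / n) (hr' : r' = ((m : ℝ) + 1) / n)
    (h0 : 0 < r) (h1 : r < 1) (h1' : r' < 1) :
    ((m : ℝ) + 1) * ∑' i : ℕ, r' ^ (i + 1) / ((i : ℝ) + 2) -
        (m : ℝ) * ∑' i : ℕ, r ^ (i + 1) / ((i : ℝ) + 2) ≤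
      (r * (1 + r') + r') / (2 * (1 - r')) := by
  have hn0 : (0 : ℝ) < n := by exact_mod_cast hn
  have hrr' : r < r' := by rw [hr, hr']; gcongr; linarith
  have h0' : 0 < r' := h0.trans hrr'
  have hdn : (n : ℝ) * (r' - r) = 1 := by
    rw [hr, hr']; field_simp; ring
  have hnr' : ((m : ℝ) + 1) = n * r' := by rw [hr']; field_simp
  have hnr : (m : ℝ) = n * r := by rw [hr]; field_simp
  have h1r' : (0 : ℝ) < 1 - r' := by linarith
  have h1r : (0 : ℝ) < 1 - r := by linarith
  have hf' : Summable (fun i : ℕ => (n : ℝ) * r' ^ (i + 2) / ((i : ℝ) + 2)) :=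
    summable_aux n r' hn0.le h0'.le h1'
  have hf : Summable (fun i : ℕ => (n : ℝ) * r ^ (i + 2) / ((i : ℝ) + 2)) :=
    summable_aux n r hn0.le h0.le h1
  have hgr' : Summable (fun i : ℕ => r' ^ (i + 1)) := by
    simpa [pow_succ'] using (summable_geometric_of_lt_one h0'.le h1').mul_left r'
  have hgr : Summable (fun i : ℕ => r ^ (i + 1)) := by
    simpa [pow_succ'] using (summable_geometric_of_lt_one h0.le h1).mul_left r
  have hg : Summable (fun i : ℕ => (r' ^ (i + 1) + r ^ (i + 1)) / 2) := by
    apply Summable.div_const (hgr'.add hgr)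
  have e1 : ((m : ℝ) + 1) * ∑' i : ℕ, r' ^ (i + 1) / ((i : ℝ) + 2)
      = ∑' i : ℕ, (n : ℝ) * r' ^ (i + 2) / ((i : ℝ) + 2) := by
    rw [← tsum_mul_left]
    congr 1; funext i; rw [hnr']; ring
  have e2 : ((m : ℝ)) * ∑' i : ℕ, r ^ (i + 1) / ((i : ℝ) + 2)
      = ∑' i : ℕ, (n : ℝ) * r ^ (i + 2) / ((i : ℝ) + 2) := by
    rw [← tsum_mul_left]
    congr 1; funext i; rw [hnr]; ring
  rw [e1, e2, ← Summable.tsum_sub hf' hf]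
  have hterm : ∀ i : ℕ, (n : ℝ) * r' ^ (i + 2) / ((i : ℝ) + 2)
      - (n : ℝ) * r ^ (i + 2) / ((i : ℝ) + 2) ≤ (r' ^ (i + 1) + r ^ (i + 1)) / 2 := by
    intro i
    have hk := key_pow r' r h0.le hrr'.le (i + 2)
    have hs : i + 2 - 1 = i + 1 := by omega
    rw [hs] at hk
    push_cast at hk
    have hi2 : (0 : ℝ) < (i : ℝ) + 2 := by positivity
    have hb := mul_le_mul_of_nonneg_left hk hn0.le
    have hlhs : (n : ℝ) * r' ^ (i + 2) / ((i : ℝ) + 2)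
        - (n : ℝ) * r ^ (i + 2) / ((i : ℝ) + 2)
        = (n : ℝ) * (r' ^ (i + 2) - r ^ (i + 2)) / ((i : ℝ) + 2) := by ring
    rw [hlhs]
    calc (n : ℝ) * (r' ^ (i + 2) - r ^ (i + 2)) / ((i : ℝ) + 2)
        ≤ (n : ℝ) * (((i : ℝ) + 2) * (r' - r) * (r' ^ (i + 1) + r ^ (i + 1)) / 2)
            / ((i : ℝ) + 2) := by
          exact div_le_div_of_nonneg_right hb hi2.le |>.trans_eq rfl
      _ = ((n : ℝ) * (r' - r)) * ((r' ^ (i + 1) + r ^ (i + 1)) / 2)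
            * (((i : ℝ) + 2) / ((i : ℝ) + 2)) := by ring
      _ = (r' ^ (i + 1) + r ^ (i + 1)) / 2 := by
          rw [div_self hi2.ne', hdn, one_mul, mul_one]
  calc ∑' i : ℕ, ((n : ℝ) * r' ^ (i + 2) / ((i : ℝ) + 2)
          - (n : ℝ) * r ^ (i + 2) / ((i : ℝ) + 2))
      ≤ ∑' i : ℕ, (r' ^ (i + 1) + r ^ (i + 1)) / 2 :=
        Summable.tsum_le_tsum hterm (hf'.sub hf) hg
    _ = (r' * (1 - r')⁻¹ + r * (1 - r)⁻¹) / 2 := by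
        rw [tsum_div_const, Summable.tsum_add hgr' hgr]
        congr 2
        · calc ∑' i : ℕ, r' ^ (i + 1) = ∑' i : ℕ, r' * r' ^ i := by
                congr 1; funext i; rw [pow_succ']
            _ = r' * (1 - r')⁻¹ := by rw [tsum_mul_left, tsum_geometric_of_lt_one h0'.le h1']
        · calc ∑' i : ℕ, r ^ (i + 1) = ∑' i : ℕ, r * r ^ i := by
                congr 1; funext i; rw [pow_succ']
            _ = r * (1 - r)⁻¹ := by rw [tsum_mul_left, tsum_geometric_of_lt_one h0.le h1]
    _ ≤ (r * (1 + r') + r') / (2 * (1 - r')) := by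
        have key : 0 ≤ r * (2 * r' - r - r * r') := by
          nlinarith [mul_pos h0 (mul_pos h0' h1r'),
            mul_nonneg (sub_nonneg.2 hrr'.le) h0'.le,
            mul_nonneg h0.le (mul_nonneg (sub_nonneg.2 hrr'.le) h0'.le)]
        rw [inv_eq_one_div, inv_eq_one_div, mul_one_div, mul_one_div,
          div_add_div _ _ h1r'.ne' h1r.ne', div_div,
          div_le_div_iff₀ (by positivity) (by positivity)]
        nlinarith [mul_nonneg h1r'.le key]
end
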